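/- arXiv:1804.04916 — 4 statements merged into one kernel-verified Lean document; each statement's English description precedes it below -/
import Mathlib

section
/- Under the setup below, there exist constants 0 < c ≤ C, depending only on the constants in the assumptions (in particular not on K, h, or the particular partition), such that c·h^d ≤ λ_min(Q_m) ≤ λ_max(Q_m) ≤ C·h^d, where Q_m := ∫_𝒳 p(x)p(x)'f(x)dx is the population Gram matrix of the basis. (Lemma SA-1, population part.) -/
open MeasureTheory Filter Metric Matrix
open scoped BigOperators ENNReal

noncomputable section

/-- Euclidean space `ℝ^d`. -/
abbrev Euc (d : ℕ) := EuclideanSpace ℝ (Fin d)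

/-- Order `[q]` of a multi-index. -/
def mOrder {d : ℕ} (q : Fin d → ℕ) : ℕ := ∑ i, q i

/-- Partial derivative in the `i`-th coordinate direction. -/
noncomputable def lineD {d : ℕ} (i : Fin d) (f : Euc d → ℝ) : Euc d → ℝ :=
  fun x => lineDeriv ℝ f x (EuclideanSpace.single i 1)

/-- Multi-index partial derivative `∂^q f`. -/
noncomputable def mderiv {d : ℕ} (q : Fin d → ℕ) (f : Euc d → ℝ) : Euc d → ℝ :=
  (List.finRange d).foldr (fun i g => (lineD i)^[q i] g) f

/-- Euclidean norm of a vector in `ℝ^K`. -/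
noncomputable def eNorm {K : ℕ} (v : Fin K → ℝ) : ℝ := Real.sqrt (∑ k, v k ^ 2)

/-- Sup-norm of a vector. -/
noncomputable def vSupNorm {K : ℕ} (v : Fin K → ℝ) : ℝ := ⨆ k, |v k|

/-- Quadratic form `v'Av`. -/
def quadForm {ι : Type*} [Fintype ι] (A : Matrix ι ι ℝ) (v : ι → ℝ) : ℝ :=
  ∑ k, ∑ l, v k * A k l * v l

/-- Minimum eigenvalue of a symmetric matrix, as the infimum of its Rayleigh quotient. -/
noncomputable def lamMin {ι : Type*} [Fintype ι] (A : Matrix ι ι ℝ) : ℝ :=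
  sInf {r | ∃ v : ι → ℝ, ∑ k, v k ^ 2 = 1 ∧ r = quadForm A v}

/-- Maximum eigenvalue of a symmetric matrix, as the supremum of its Rayleigh quotient. -/
noncomputable def lamMax {ι : Type*} [Fintype ι] (A : Matrix ι ι ℝ) : ℝ :=
  sSup {r | ∃ v : ι → ℝ, ∑ k, v k ^ 2 = 1 ∧ r = quadForm A v}

/-- Maximum absolute row-sum norm `‖A‖_∞` of a matrix. -/
noncomputable def rowSumNorm {ι : Type*} [Fintype ι] (A : Matrix ι ι ℝ) : ℝ :=
  ⨆ k, ∑ l, |A k l|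

/-- Spectral norm (`ℓ²`-operator norm) of a matrix. -/
noncomputable def specNorm {ι : Type*} [Fintype ι] [DecidableEq ι] (A : Matrix ι ι ℝ) : ℝ :=
  ‖LinearMap.toContinuousLinearMap (Matrix.toEuclideanLin A)‖

/-- Open polyhedron: a finite intersection of open halfspaces. -/
def IsOpenPolyhedron {d : ℕ} (s : Set (Euc d)) : Prop :=
  ∃ (N : ℕ) (a : Fin N → Euc d) (b : Fin N → ℝ),
    s = {x | ∀ i, (inner ℝ (a i) x : ℝ) < b i}

lemma hyperplane_null {d : ℕ} (a : Euc d) (b : ℝ) (ha : a ≠ 0) :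
    volume {x : Euc d | (inner ℝ a x : ℝ) = b} = 0 := by
  have hna : (‖a‖:ℝ)^2 ≠ 0 := pow_ne_zero 2 (norm_ne_zero_iff.mpr ha)
  have : {x : Euc d | (inner ℝ a x : ℝ) = b}
      = (fun x => x + (-(b/‖a‖^2)) • a) ⁻¹' (LinearMap.ker (innerSL ℝ a : Euc d →ₗ[ℝ] ℝ) : Set (Euc d)) := by
    ext x
    simp only [Set.mem_setOf_eq, Set.mem_preimage, SetLike.mem_coe, LinearMap.mem_ker]
    rw [show (innerSL ℝ a : Euc d →ₗ[ℝ] ℝ) (x + (-(b/‖a‖^2)) • a) = (inner ℝ a (x + (-(b/‖a‖^2)) • a) : ℝ) from rfl]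
    rw [inner_add_right, inner_smul_right, real_inner_self_eq_norm_sq]
    constructor
    · intro hx; rw [hx]; field_simp; ring
    · intro hx
      have : (inner ℝ a x:ℝ) = (b/‖a‖^2) * ‖a‖^2 := by linarith
      rw [this]; field_simp
  rw [this, measure_preimage_add_right]
  apply Measure.addHaar_submodule
  intro htop
  have hmem : a ∈ LinearMap.ker (innerSL ℝ a : Euc d →ₗ[ℝ] ℝ) := htop ▸ Submodule.mem_top
  rw [LinearMap.mem_ker] at hmem
  have : (inner ℝ a a : ℝ) = 0 := hmem
  rw [real_inner_self_eq_norm_sq] at this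
  exact hna this

lemma polyhedron_open {d : ℕ} {s : Set (Euc d)} (hs : IsOpenPolyhedron s) : IsOpen s := by
  obtain ⟨N, a, b, rfl⟩ := hs
  have : {x : Euc d | ∀ j, (inner ℝ (a j) x:ℝ) < b j} = ⋂ j, {x | (inner ℝ (a j) x:ℝ) < b j} := by
    ext; simp
  rw [this]
  exact isOpen_iInter_of_finite fun j =>
    isOpen_lt (innerSL ℝ (a j)).continuous continuous_const

lemma polyhedron_frontier_null {d : ℕ} {s : Set (Euc d)} (hs : IsOpenPolyhedron s) :
    volume (frontier s) = 0 := by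
  classical
  have hopen := polyhedron_open hs
  obtain ⟨N, a, b, rfl⟩ := hs
  by_cases hdeg : ∃ i, a i = 0 ∧ b i ≤ 0
  · obtain ⟨i, hai, hbi⟩ := hdeg
    have : {x : Euc d | ∀ j, (inner ℝ (a j) x:ℝ) < b j} = ∅ := by
      ext x
      simp only [Set.mem_setOf_eq, Set.mem_empty_iff_false, iff_false, not_forall, not_lt]
      exact ⟨i, by rw [hai]; simpa using hbi⟩
    rw [this]; simp
  · push_neg at hdeg
    have hsub : frontier {x : Euc d | ∀ j, (inner ℝ (a j) x:ℝ) < b j}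
        ⊆ ⋃ i : Fin N, (if a i = 0 then ∅ else {x : Euc d | (inner ℝ (a i) x:ℝ) = b i}) := by
      intro x hx
      rw [hopen.frontier_eq] at hx
      have hcl : ∀ j, (inner ℝ (a j) x : ℝ) ≤ b j := by
        have hclosed : IsClosed {x : Euc d | ∀ j, (inner ℝ (a j) x:ℝ) ≤ b j} := by
          have : {x : Euc d | ∀ j, (inner ℝ (a j) x:ℝ) ≤ b j}
              = ⋂ j, {x | (inner ℝ (a j) x:ℝ) ≤ b j} := by ext; simp
          rw [this]
          exact isClosed_iInter fun j =>
            isClosed_le (innerSL ℝ (a j)).continuous continuous_const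
        exact closure_minimal ((by intro y hy j; exact le_of_lt (hy j))) hclosed hx.1
      have hnot : ¬ ∀ j, (inner ℝ (a j) x : ℝ) < b j := hx.2
      push_neg at hnot
      obtain ⟨j, hj⟩ := hnot
      have heq : (inner ℝ (a j) x : ℝ) = b j := le_antisymm (hcl j) hj
      have haj : a j ≠ 0 := by
        intro h0
        have : (inner ℝ (a j) x : ℝ) = 0 := by rw [h0]; simp
        rw [this] at heq
        exact absurd (hdeg j h0) (by rw [← heq]; simp)
      exact Set.mem_iUnion.2 ⟨j, by rw [if_neg haj]; exact heq⟩
    refine measure_mono_null hsub (measure_iUnion_null fun i => ?_)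
    by_cases hai : a i = 0
    · simp [hai]
    · rw [if_neg hai]; exact hyperplane_null _ _ hai
set_option maxHeartbeats 2000000 in
set_option maxHeartbeats 2000000 in
/-- Lemma SA-1, population part.
Under the quasi-uniform partition and local basis assumptions, there are constants
`0 < c ≤ C`, depending only on the constants of the assumptions (not on `K`, `h`,
or the particular partition), such that
`c·h^d ≤ λ_min(Q_m) ≤ λ_max(Q_m) ≤ C·h^d` for the population Gram matrix
`Q_m = ∫_𝒳 p(x)p(x)' f(x) dx`. -/
theorem statement0 (d : ℕ) (hd : 1 ≤ d)
    (ρqu Cqu f₁ f₂ c₀ c₂ : ℝ) (Mb : ℕ)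
    (hρqu : 0 < ρqu) (hf₁ : 0 < f₁) (hc₀ : 0 < c₀) :
    ∃ c C : ℝ, 0 < c ∧ c ≤ C ∧
      ∀ (𝒳 : Set (Euc d)) (f : Euc d → ℝ) (Δ : Finset (Set (Euc d))) (h : ℝ)
        (K : ℕ) (p : Euc d → Fin K → ℝ),
        -- domain and density
        IsCompact 𝒳 → IsConnected 𝒳 →
        Measurable f → ContinuousOn f 𝒳 →
        (∀ x ∈ 𝒳, f₁ ≤ f x ∧ f x ≤ f₂) →
        (∫ x in 𝒳, f x) = 1 →
        -- quasi-uniform partition with maximal mesh h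
        0 < h →
        (∀ δ ∈ Δ, IsOpenPolyhedron δ) →
        (∀ δ ∈ Δ, δ ⊆ 𝒳) →
        (∀ δ ∈ Δ, ∀ δ' ∈ Δ, δ ≠ δ' → Disjoint δ δ') →
        (⋃ δ ∈ Δ, closure δ) = 𝒳 →
        (∀ δ ∈ Δ, ∃ z₁ r₁ z₂ r₂, 0 < r₁ ∧ Metric.closedBall z₁ r₁ ⊆ δ ∧
            δ ⊆ Metric.closedBall z₂ r₂ ∧ ρqu * r₂ ≤ r₁) →
        (∀ δ ∈ Δ, ∀ δ' ∈ Δ, Metric.diam δ ≤ Cqu * Metric.diam δ') →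
        (∀ δ ∈ Δ, Metric.diam δ ≤ h) →
        (∃ δ ∈ Δ, Metric.diam δ = h) →
        -- local basis assumptions (a), (b), (c)
        1 ≤ K →
        (∀ k : Fin K, Measurable (fun x => p x k)) →
        (∀ k : Fin K,
          IsConnected (⋃₀ {δ : Set (Euc d) | δ ∈ Δ ∧ ¬ ∀ x ∈ δ, p x k = 0}) ∧
          Set.ncard {δ : Set (Euc d) | δ ∈ Δ ∧ ¬ ∀ x ∈ δ, p x k = 0} ≤ Mb ∧
          Set.ncard {k' : Fin K |
            ¬ ∀ x ∈ ⋃₀ {δ : Set (Euc d) | δ ∈ Δ ∧ ¬ ∀ x ∈ δ, p x k = 0},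
              p x k' = 0} ≤ Mb) →
        (∀ (k : Fin K) (a : Fin K → ℝ),
          c₀ * a k ^ 2 * h ^ d ≤
            ∫ x in ⋃₀ {δ : Set (Euc d) | δ ∈ Δ ∧ ¬ ∀ x ∈ δ, p x k = 0},
              (∑ j, a j * p x j) ^ 2) →
        (∀ δ ∈ Δ, ∀ x ∈ closure δ, eNorm (p x) ≤ c₂) →
        -- conclusion: eigenvalue bounds for the population Gram matrix
        (let Qm : Matrix (Fin K) (Fin K) ℝ := fun k l => ∫ x in 𝒳, p x k * p x l * f x
        c * h ^ d ≤ lamMin Qm ∧ lamMin Qm ≤ lamMax Qm ∧ lamMax Qm ≤ C * h ^ d) := by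
  classical
  set ω₀ : ℝ := (volume (Metric.ball (0 : Euc d) 1)).toReal with hω₀def
  have hω₀0 : 0 ≤ ω₀ := ENNReal.toReal_nonneg
  set c : ℝ := f₁ * c₀ / ((Mb : ℝ) + 1) with hcdef
  set C0 : ℝ := (max f₂ 1) * (max (c₂^2) 1) * ((Mb:ℝ) + 1) * (ω₀ + 1) with hC0def
  set C : ℝ := max c C0 with hCdef
  have hcpos : 0 < c := by
    apply div_pos (mul_pos hf₁ hc₀)
    positivity
  refine ⟨c, C, hcpos, le_max_left _ _, ?_⟩
  intro 𝒳 f Δ h K p hXcpt hXconn hfm hfc hfbd hfint hh hpoly hsubX hdisj hcover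
    hballs hdiamrat hdiam hdiameq hK hpm hA hB hCb
  intro Qm
  have hQm : ∀ k l, Qm k l = ∫ x in 𝒳, p x k * p x l * f x := fun k l => rfl
  obtain ⟨x₀, hx₀⟩ := hXconn.nonempty
  have hf₁₂ : f₁ ≤ f₂ := le_trans (hfbd x₀ hx₀).1 (hfbd x₀ hx₀).2
  have hf₂ : 0 < f₂ := lt_of_lt_of_le hf₁ hf₁₂
  have hXm : MeasurableSet 𝒳 := hXcpt.isClosed.measurableSet
  have hμX : volume 𝒳 ≠ ⊤ := hXcpt.measure_lt_top.ne
  have hδm : ∀ δ ∈ Δ, MeasurableSet δ := fun δ hδ => (polyhedron_open (hpoly δ hδ)).measurableSet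
  set Cg : ℝ := max (c₂^2) 1 with hCgdef
  have hCg1 : (1:ℝ) ≤ Cg := le_max_right _ _
  have hCg0 : (0:ℝ) < Cg := lt_of_lt_of_le one_pos hCg1
  set F₂ : ℝ := max f₂ 1 with hF₂def
  have hF₂1 : (1:ℝ) ≤ F₂ := le_max_right _ _
  -- pointwise bound on the basis
  have hpbd : ∀ x ∈ 𝒳, ∑ k, p x k ^ 2 ≤ Cg := by
    intro x hx
    rw [← hcover] at hx
    simp only [Set.mem_iUnion] at hx
    obtain ⟨δ, hδ, hxδ⟩ := hx
    have h1 : Real.sqrt (∑ k, p x k ^2) ≤ c₂ := hCb δ hδ x hxδ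
    have hs0 : (0:ℝ) ≤ ∑ k, p x k ^2 := Finset.sum_nonneg fun _ _ => sq_nonneg _
    calc ∑ k, p x k^2 = Real.sqrt (∑ k, p x k^2) ^2 := (Real.sq_sqrt hs0).symm
      _ ≤ c₂^2 := pow_le_pow_left₀ (Real.sqrt_nonneg _) h1 2
      _ ≤ Cg := le_max_left _ _
  have hfabs : ∀ x ∈ 𝒳, |f x| ≤ F₂ := by
    intro x hx
    rw [abs_le]
    constructor
    · have := (hfbd x hx).1; have : (0:ℝ) < f x := lt_of_lt_of_le hf₁ this; linarith [hF₂1]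
    · exact le_trans (hfbd x hx).2 (le_max_left _ _)
  -- integrability helper
  have hint : ∀ (φ : Euc d → ℝ) (M : ℝ), Measurable φ → (∀ x ∈ 𝒳, |φ x| ≤ M) →
      IntegrableOn φ 𝒳 volume := by
    intro φ M hm hb
    refine Measure.integrableOn_of_bounded hμX hm.aestronglyMeasurable (M := M) ?_
    exact (ae_restrict_iff' hXm).2 (Filter.Eventually.of_forall fun x hx => by
      simpa [Real.norm_eq_abs] using hb x hx)
  have hpabs : ∀ x ∈ 𝒳, ∀ k, |p x k| ≤ Real.sqrt Cg := by
    intro x hx k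
    rw [← Real.sqrt_sq_eq_abs]
    exact Real.sqrt_le_sqrt (le_trans
      (Finset.single_le_sum (f := fun i => p x i ^ 2) (fun i _ => sq_nonneg _)
        (Finset.mem_univ k)) (hpbd x hx))
  have hintkl : ∀ k l : Fin K, IntegrableOn (fun x => p x k * p x l * f x) 𝒳 volume := by
    intro k l
    refine hint _ (Cg * F₂) (((hpm k).mul (hpm l)).mul hfm) ?_
    intro x hx
    rw [abs_mul, abs_mul]
    have h1 := hpabs x hx k
    have h2 := hpabs x hx l
    have h3 := hfabs x hx
    have hCgs : Real.sqrt Cg * Real.sqrt Cg = Cg := Real.mul_self_sqrt hCg0.le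
    have hF₂0 : (0:ℝ) ≤ F₂ := le_trans zero_le_one hF₂1
    calc |p x k| * |p x l| * |f x| ≤ (Real.sqrt Cg * Real.sqrt Cg) * F₂ := by
          apply mul_le_mul _ h3 (abs_nonneg _) (by positivity)
          exact mul_le_mul h1 h2 (abs_nonneg _) (Real.sqrt_nonneg _)
      _ = Cg * F₂ := by rw [hCgs]
  -- per-vector setup
  have hgm : ∀ v : Fin K → ℝ, Measurable (fun x => (∑ j, v j * p x j)^2) := by
    intro v
    exact (Finset.measurable_sum Finset.univ fun j _ => (hpm j).const_mul (v j)).pow_const 2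
  have hgint : ∀ v : Fin K → ℝ, (∑ k, v k ^ 2) = 1 →
      IntegrableOn (fun x => (∑ j, v j * p x j)^2) 𝒳 volume := by
    intro v hv
    refine hint _ Cg (hgm v) ?_
    intro x hx
    rw [abs_of_nonneg (sq_nonneg _)]
    calc (∑ j, v j * p x j)^2 ≤ (∑ j, v j ^2) * ∑ j, p x j ^2 :=
          Finset.sum_mul_sq_le_sq_mul_sq _ _ _
      _ = ∑ j, p x j ^2 := by rw [hv, one_mul]
      _ ≤ Cg := hpbd x hx
  have hgfint : ∀ v : Fin K → ℝ, (∑ k, v k ^ 2) = 1 →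
      IntegrableOn (fun x => (∑ j, v j * p x j)^2 * f x) 𝒳 volume := by
    intro v hv
    refine hint _ (Cg * F₂) ((hgm v).mul hfm) ?_
    intro x hx
    rw [abs_mul, abs_of_nonneg (sq_nonneg _)]
    have h1 : (∑ j, v j * p x j)^2 ≤ Cg := by
      calc (∑ j, v j * p x j)^2 ≤ (∑ j, v j ^2) * ∑ j, p x j ^2 :=
            Finset.sum_mul_sq_le_sq_mul_sq _ _ _
        _ = ∑ j, p x j ^2 := by rw [hv, one_mul]
        _ ≤ Cg := hpbd x hx
    exact mul_le_mul h1 (hfabs x hx) (abs_nonneg _) hCg0.le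
  -- the quadratic form identity
  have qeq : ∀ v : Fin K → ℝ, quadForm Qm v = ∫ x in 𝒳, (∑ j, v j * p x j)^2 * f x := by
    intro v
    unfold quadForm
    have h1 : ∀ k : Fin K, ∑ l, v k * Qm k l * v l
        = ∫ x in 𝒳, ∑ l, (v k * v l) * (p x k * p x l * f x) := by
      intro k
      rw [integral_finset_sum _ (fun l _ => (hintkl k l).const_mul _)]
      refine Finset.sum_congr rfl fun l _ => ?_
      rw [integral_const_mul, hQm k l]
      ring
    rw [Finset.sum_congr rfl fun k _ => h1 k,
      ← integral_finset_sum _ (fun k _ => integrable_finset_sum _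
        (fun l _ => (hintkl k l).const_mul _))]
    refine integral_congr_ae (Filter.Eventually.of_forall fun x => ?_)
    show (∑ k, ∑ l, (v k * v l) * (p x k * p x l * f x)) = (∑ j, v j * p x j)^2 * f x
    rw [sq, Finset.sum_mul_sum, Finset.sum_mul]
    refine Finset.sum_congr rfl fun k _ => ?_
    rw [Finset.sum_mul]
    exact Finset.sum_congr rfl fun l _ => by ring
  -- counting bounds
  have hcard_cells : ∀ k : Fin K,
      (Δ.filter (fun δ => ¬ ∀ x ∈ δ, p x k = 0)).card ≤ Mb := by
    intro k
    have h2 := (hA k).2.1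
    have heq : {δ : Set (Euc d) | δ ∈ Δ ∧ ¬ ∀ x ∈ δ, p x k = 0}
        = ↑(Δ.filter (fun δ => ¬ ∀ x ∈ δ, p x k = 0)) := by
      ext δ; simp [Finset.mem_filter]
    rwa [heq, Set.ncard_coe_finset] at h2
  have hcard_fns : ∀ δ ∈ Δ,
      (Finset.univ.filter (fun k : Fin K => ¬ ∀ x ∈ δ, p x k = 0)).card ≤ Mb := by
    intro δ hδ
    by_cases hne : (Finset.univ.filter (fun k : Fin K => ¬ ∀ x ∈ δ, p x k = 0)).Nonempty
    · obtain ⟨k₀, hk₀⟩ := hne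
      have hk₀' : ¬ ∀ x ∈ δ, p x k₀ = 0 := (Finset.mem_filter.1 hk₀).2
      have hδH : δ ⊆ ⋃₀ {δ' : Set (Euc d) | δ' ∈ Δ ∧ ¬ ∀ x ∈ δ', p x k₀ = 0} :=
        fun x hx => ⟨δ, ⟨hδ, hk₀'⟩, hx⟩
      have hsubset : (Finset.univ.filter (fun k : Fin K => ¬ ∀ x ∈ δ, p x k = 0)) ⊆
          Finset.univ.filter (fun k' : Fin K =>
            ¬ ∀ x ∈ ⋃₀ {δ' : Set (Euc d) | δ' ∈ Δ ∧ ¬ ∀ x ∈ δ', p x k₀ = 0}, p x k' = 0) := by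
        intro k hk
        simp only [Finset.mem_filter, Finset.mem_univ, true_and] at hk ⊢
        intro hall
        exact hk (fun x hx => hall x (hδH hx))
      have h3 := (hA k₀).2.2
      have heq : {k' : Fin K |
            ¬ ∀ x ∈ ⋃₀ {δ' : Set (Euc d) | δ' ∈ Δ ∧ ¬ ∀ x ∈ δ', p x k₀ = 0}, p x k' = 0}.ncard
          = (Finset.univ.filter (fun k' : Fin K =>
            ¬ ∀ x ∈ ⋃₀ {δ' : Set (Euc d) | δ' ∈ Δ ∧ ¬ ∀ x ∈ δ', p x k₀ = 0}, p x k' = 0)).card := by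
        rw [Set.ncard_eq_toFinset_card', Set.toFinset_setOf]
      rw [heq] at h3
      exact le_trans (Finset.card_le_card hsubset) h3
    · rw [Finset.not_nonempty_iff_eq_empty.1 hne]; simp
    -- decomposition of H_k into cells
  have hHeq : ∀ k : Fin K, (⋃₀ {δ : Set (Euc d) | δ ∈ Δ ∧ ¬ ∀ x ∈ δ, p x k = 0})
      = ⋃ δ ∈ Δ.filter (fun δ => ¬ ∀ x ∈ δ, p x k = 0), δ := by
    intro k; ext x
    simp only [Set.mem_sUnion, Set.mem_setOf_eq, Set.mem_iUnion, Finset.mem_filter, exists_prop]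
  have hpair : ∀ (s : Finset (Set (Euc d))), s ⊆ Δ →
      Set.Pairwise ↑s (Function.onFun Disjoint (fun δ : Set (Euc d) => δ)) :=
    fun s hs δ hδ δ' hδ' hne => hdisj δ (hs hδ) δ' (hs hδ') hne
  have hHint : ∀ (v : Fin K → ℝ), (∑ k, v k ^2) = 1 → ∀ k : Fin K,
      (∫ x in (⋃₀ {δ : Set (Euc d) | δ ∈ Δ ∧ ¬ ∀ x ∈ δ, p x k = 0}), (∑ j, v j * p x j)^2)
        = ∑ δ ∈ Δ.filter (fun δ => ¬ ∀ x ∈ δ, p x k = 0), ∫ x in δ, (∑ j, v j * p x j)^2 := by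
    intro v hv k
    rw [hHeq k]
    exact integral_biUnion_finset _ (fun δ hδ => hδm δ (Finset.mem_filter.1 hδ).1)
      (hpair _ (Finset.filter_subset _ _))
      (fun δ hδ => (hgint v hv).mono_set (hsubX δ (Finset.mem_filter.1 hδ).1))
  have hswap : ∀ (F : Set (Euc d) → ℝ),
      (∑ k : Fin K, ∑ δ ∈ Δ.filter (fun δ => ¬ ∀ x ∈ δ, p x k = 0), F δ)
        = ∑ δ ∈ Δ, ((Finset.univ.filter
            (fun k : Fin K => ¬ ∀ x ∈ δ, p x k = 0)).card : ℝ) * F δ := by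
    intro F
    simp only [Finset.sum_filter]
    rw [Finset.sum_comm]
    refine Finset.sum_congr rfl fun δ hδ => ?_
    rw [← Finset.sum_filter, Finset.sum_const, nsmul_eq_mul]
  have hgpos : ∀ (v : Fin K → ℝ) (s : Set (Euc d)), MeasurableSet s →
      0 ≤ ∫ x in s, (∑ j, v j * p x j)^2 :=
    fun v s hs => setIntegral_nonneg hs fun x _ => sq_nonneg _
  -- lower bound for ∫_𝒳 g
  have hlowerg : ∀ v : Fin K → ℝ, (∑ k, v k ^2) = 1 →
      c₀ * h^d ≤ ((Mb:ℝ)+1) * ∫ x in 𝒳, (∑ j, v j * p x j)^2 := by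
    intro v hv
    have h1 : c₀ * h^d = ∑ k : Fin K, c₀ * v k^2 * h^d := by
      have : ∑ k : Fin K, c₀ * v k^2 * h^d = (c₀ * h^d) * ∑ k, v k^2 := by
        rw [Finset.mul_sum]; exact Finset.sum_congr rfl fun k _ => by ring
      rw [this, hv, mul_one]
    have h2 : ∑ k : Fin K, c₀ * v k^2 * h^d
        ≤ ∑ k : Fin K, ∫ x in (⋃₀ {δ : Set (Euc d) | δ ∈ Δ ∧ ¬ ∀ x ∈ δ, p x k = 0}),
            (∑ j, v j * p x j)^2 :=
      Finset.sum_le_sum fun k _ => hB k v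
    have h3 : (∑ k : Fin K, ∫ x in (⋃₀ {δ : Set (Euc d) | δ ∈ Δ ∧ ¬ ∀ x ∈ δ, p x k = 0}),
            (∑ j, v j * p x j)^2)
        = ∑ δ ∈ Δ, ((Finset.univ.filter
            (fun k : Fin K => ¬ ∀ x ∈ δ, p x k = 0)).card : ℝ) * ∫ x in δ, (∑ j, v j * p x j)^2 := by
      rw [Finset.sum_congr rfl fun k _ => hHint v hv k, hswap _]
    have h4 : (∑ δ ∈ Δ, ((Finset.univ.filter
            (fun k : Fin K => ¬ ∀ x ∈ δ, p x k = 0)).card : ℝ) * ∫ x in δ, (∑ j, v j * p x j)^2)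
        ≤ (Mb:ℝ) * ∑ δ ∈ Δ, ∫ x in δ, (∑ j, v j * p x j)^2 := by
      rw [Finset.mul_sum]
      exact Finset.sum_le_sum fun δ hδ =>
        mul_le_mul_of_nonneg_right (Nat.cast_le.2 (hcard_fns δ hδ)) (hgpos v δ (hδm δ hδ))
    have h5 : (∑ δ ∈ Δ, ∫ x in δ, (∑ j, v j * p x j)^2)
        = ∫ x in ⋃ δ ∈ Δ, δ, (∑ j, v j * p x j)^2 :=
      (integral_biUnion_finset Δ (fun δ hδ => hδm δ hδ) (hpair Δ (Finset.Subset.refl Δ))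
        (fun δ hδ => (hgint v hv).mono_set (hsubX δ hδ))).symm
    have h6 : (∫ x in ⋃ δ ∈ Δ, δ, (∑ j, v j * p x j)^2) ≤ ∫ x in 𝒳, (∑ j, v j * p x j)^2 :=
      setIntegral_mono_set (hgint v hv) (Filter.Eventually.of_forall fun x => sq_nonneg _)
        (HasSubset.Subset.eventuallyLE (Set.iUnion₂_subset fun δ hδ => hsubX δ hδ))
    have h7 : (0:ℝ) ≤ ∫ x in 𝒳, (∑ j, v j * p x j)^2 := hgpos v 𝒳 hXm
    have h8 : (Mb:ℝ) * (∫ x in 𝒳, (∑ j, v j * p x j)^2)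
        ≤ ((Mb:ℝ)+1) * ∫ x in 𝒳, (∑ j, v j * p x j)^2 := by nlinarith
    calc c₀ * h^d = ∑ k : Fin K, c₀ * v k^2 * h^d := h1
      _ ≤ _ := h2
      _ = _ := h3
      _ ≤ (Mb:ℝ) * ∑ δ ∈ Δ, ∫ x in δ, (∑ j, v j * p x j)^2 := h4
      _ = (Mb:ℝ) * ∫ x in ⋃ δ ∈ Δ, δ, (∑ j, v j * p x j)^2 := by rw [h5]
      _ ≤ (Mb:ℝ) * ∫ x in 𝒳, (∑ j, v j * p x j)^2 :=
          mul_le_mul_of_nonneg_left h6 (Nat.cast_nonneg Mb)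
      _ ≤ ((Mb:ℝ)+1) * ∫ x in 𝒳, (∑ j, v j * p x j)^2 := h8
  -- volume of a cell
  have hballvol : ∀ z : Euc d, volume (Metric.closedBall z h)
      = ENNReal.ofReal (h^d) * volume (Metric.ball (0:Euc d) 1) := by
    intro z; rw [Measure.addHaar_closedBall _ _ hh.le, finrank_euclideanSpace_fin]
  have hμδbd : ∀ δ ∈ Δ, (volume δ).toReal ≤ ω₀ * h^d := by
    intro δ hδ
    rcases Set.eq_empty_or_nonempty δ with h0 | ⟨z, hz⟩
    · rw [h0]; simp; positivity
    · have hbd : Bornology.IsBounded δ := hXcpt.isBounded.subset (hsubX δ hδ)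
      have hsubb : δ ⊆ Metric.closedBall z h := fun x hx =>
        (Metric.dist_le_diam_of_mem hbd hx hz).trans (hdiam δ hδ)
      have hfin : volume (Metric.closedBall z h) ≠ ⊤ := by
        rw [hballvol z]
        exact ENNReal.mul_ne_top ENNReal.ofReal_ne_top
          ((measure_mono Metric.ball_subset_closedBall).trans_lt
            (isCompact_closedBall _ _).measure_lt_top).ne
      calc (volume δ).toReal ≤ (volume (Metric.closedBall z h)).toReal :=
            ENNReal.toReal_mono hfin (measure_mono hsubb)
        _ = h^d * ω₀ := by
            rw [hballvol z, ENNReal.toReal_mul, ENNReal.toReal_ofReal (by positivity)]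
        _ = ω₀ * h^d := mul_comm _ _
  -- per-cell integral bound
  have hδint : ∀ v : Fin K → ℝ, (∑ k, v k^2) = 1 → ∀ δ ∈ Δ,
      (∫ x in δ, (∑ j, v j * p x j)^2)
        ≤ (∑ k ∈ Finset.univ.filter (fun k : Fin K => ¬ ∀ x ∈ δ, p x k = 0), v k ^2)
            * (Cg * (ω₀ * h^d)) := by
    intro v hv δ hδ
    have hv0 : (0:ℝ) ≤ ∑ k ∈ Finset.univ.filter (fun k : Fin K => ¬ ∀ x ∈ δ, p x k = 0), v k ^2 :=
      Finset.sum_nonneg fun _ _ => sq_nonneg _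
    have hpt : ∀ x ∈ δ, (∑ j, v j * p x j)^2
        ≤ (∑ k ∈ Finset.univ.filter (fun k : Fin K => ¬ ∀ x ∈ δ, p x k = 0), v k^2) * Cg := by
      intro x hx
      have hxX : x ∈ 𝒳 := hsubX δ hδ hx
      have hre : (∑ j, v j * p x j)
          = ∑ j ∈ Finset.univ.filter (fun k : Fin K => ¬ ∀ x ∈ δ, p x k = 0), v j * p x j := by
        refine (Finset.sum_subset (Finset.subset_univ _) ?_).symm
        intro k _ hk
        have hz : ∀ y ∈ δ, p y k = 0 := by
          by_contra hcon; exact hk (Finset.mem_filter.2 ⟨Finset.mem_univ k, hcon⟩)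
        rw [hz x hx, mul_zero]
      rw [hre]
      calc (∑ j ∈ Finset.univ.filter (fun k : Fin K => ¬ ∀ x ∈ δ, p x k = 0), v j * p x j)^2
          ≤ (∑ j ∈ Finset.univ.filter (fun k : Fin K => ¬ ∀ x ∈ δ, p x k = 0), v j^2)
            * ∑ j ∈ Finset.univ.filter (fun k : Fin K => ¬ ∀ x ∈ δ, p x k = 0), p x j^2 :=
            Finset.sum_mul_sq_le_sq_mul_sq _ _ _
        _ ≤ (∑ j ∈ Finset.univ.filter (fun k : Fin K => ¬ ∀ x ∈ δ, p x k = 0), v j^2) * Cg := by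
            refine mul_le_mul_of_nonneg_left ?_ hv0
            exact le_trans (Finset.sum_le_sum_of_subset_of_nonneg (Finset.subset_univ _)
              (fun i _ _ => sq_nonneg _)) (hpbd x hxX)
    have hμδ : volume δ ≠ ⊤ := ((measure_mono (hsubX δ hδ)).trans_lt hXcpt.measure_lt_top).ne
    calc (∫ x in δ, (∑ j, v j * p x j)^2)
        ≤ ∫ _x in δ, ((∑ k ∈ Finset.univ.filter
            (fun k : Fin K => ¬ ∀ x ∈ δ, p x k = 0), v k^2) * Cg) :=
          by
            refine setIntegral_mono_on ((hgint v hv).mono_set (hsubX δ hδ)) ?_ (hδm δ hδ) hpt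
            exact integrableOn_const hμδ
      _ = (volume δ).toReal * ((∑ k ∈ Finset.univ.filter
            (fun k : Fin K => ¬ ∀ x ∈ δ, p x k = 0), v k^2) * Cg) := by
          rw [setIntegral_const, smul_eq_mul, measureReal_def]
      _ ≤ (ω₀ * h^d) * ((∑ k ∈ Finset.univ.filter
            (fun k : Fin K => ¬ ∀ x ∈ δ, p x k = 0), v k^2) * Cg) :=
          mul_le_mul_of_nonneg_right (hμδbd δ hδ) (mul_nonneg hv0 hCg0.le)
      _ = (∑ k ∈ Finset.univ.filter
            (fun k : Fin K => ¬ ∀ x ∈ δ, p x k = 0), v k^2) * (Cg * (ω₀ * h^d)) := by ring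
  have hswap2 : ∀ v : Fin K → ℝ,
      (∑ δ ∈ Δ, ∑ k ∈ Finset.univ.filter (fun k : Fin K => ¬ ∀ x ∈ δ, p x k = 0), v k^2)
        = ∑ k : Fin K, ((Δ.filter (fun δ => ¬ ∀ x ∈ δ, p x k = 0)).card : ℝ) * v k^2 := by
    intro v
    simp only [Finset.sum_filter]
    rw [Finset.sum_comm]
    refine Finset.sum_congr rfl fun k _ => ?_
    rw [← Finset.sum_filter, Finset.sum_const, nsmul_eq_mul]
  -- ae equality of 𝒳 and the union of open cells
  have hXae : 𝒳 =ᵐ[volume] (⋃ δ ∈ Δ, δ) := by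
    have hUsub : (⋃ δ ∈ Δ, δ) ⊆ 𝒳 := Set.iUnion₂_subset fun δ hδ => hsubX δ hδ
    have hnull : volume (𝒳 \ ⋃ δ ∈ Δ, δ) = 0 := by
      have hsub2 : 𝒳 \ (⋃ δ ∈ Δ, δ) ⊆ ⋃ δ ∈ Δ, frontier δ := by
        intro x hx
        obtain ⟨hx1, hx2⟩ := hx
        rw [← hcover] at hx1
        simp only [Set.mem_iUnion] at hx1 hx2 ⊢
        push_neg at hx2
        obtain ⟨δ, hδ, hxδ⟩ := hx1
        refine ⟨δ, hδ, ?_⟩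
        rw [(polyhedron_open (hpoly δ hδ)).frontier_eq]
        exact ⟨hxδ, hx2 δ hδ⟩
      refine measure_mono_null hsub2 ?_
      exact (measure_biUnion_null_iff Δ.countable_toSet).2
        fun δ hδ => polyhedron_frontier_null (hpoly δ hδ)
    rw [MeasureTheory.ae_eq_set]
    exact ⟨hnull, by rw [Set.diff_eq_empty.2 hUsub]; exact measure_empty⟩
  -- upper bound for ∫_𝒳 g
  have hupperg : ∀ v : Fin K → ℝ, (∑ k, v k ^2) = 1 →
      (∫ x in 𝒳, (∑ j, v j * p x j)^2) ≤ (Mb:ℝ) * (Cg * (ω₀ * h^d)) := by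
    intro v hv
    have e1 : (∫ x in 𝒳, (∑ j, v j * p x j)^2)
        = ∑ δ ∈ Δ, ∫ x in δ, (∑ j, v j * p x j)^2 := by
      rw [setIntegral_congr_set hXae,
        integral_biUnion_finset Δ (fun δ hδ => hδm δ hδ) (hpair Δ (Finset.Subset.refl Δ))
          (fun δ hδ => (hgint v hv).mono_set (hsubX δ hδ))]
    rw [e1]
    have hCgω : (0:ℝ) ≤ Cg * (ω₀ * h^d) := by positivity
    calc (∑ δ ∈ Δ, ∫ x in δ, (∑ j, v j * p x j)^2)
        ≤ ∑ δ ∈ Δ, (∑ k ∈ Finset.univ.filter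
            (fun k : Fin K => ¬ ∀ x ∈ δ, p x k = 0), v k^2) * (Cg * (ω₀ * h^d)) :=
          Finset.sum_le_sum fun δ hδ => hδint v hv δ hδ
      _ = (∑ δ ∈ Δ, ∑ k ∈ Finset.univ.filter
            (fun k : Fin K => ¬ ∀ x ∈ δ, p x k = 0), v k^2) * (Cg * (ω₀ * h^d)) :=
          (Finset.sum_mul _ _ _).symm
      _ ≤ (Mb:ℝ) * (Cg * (ω₀ * h^d)) := by
          refine mul_le_mul_of_nonneg_right ?_ hCgω
          rw [hswap2 v]
          calc (∑ k : Fin K, ((Δ.filter (fun δ => ¬ ∀ x ∈ δ, p x k = 0)).card : ℝ) * v k^2)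
              ≤ ∑ k : Fin K, (Mb:ℝ) * v k^2 :=
                Finset.sum_le_sum fun k _ =>
                  mul_le_mul_of_nonneg_right (Nat.cast_le.2 (hcard_cells k)) (sq_nonneg _)
            _ = (Mb:ℝ) * ∑ k, v k^2 := (Finset.mul_sum _ _ _).symm
            _ = (Mb:ℝ) := by rw [hv, mul_one]
  -- the main per-vector bounds
  have main : ∀ v : Fin K → ℝ, (∑ k, v k ^2) = 1 →
      c * h^d ≤ quadForm Qm v ∧ quadForm Qm v ≤ C * h^d := by
    intro v hv
    rw [qeq v]
    have hI0 : (0:ℝ) ≤ ∫ x in 𝒳, (∑ j, v j * p x j)^2 := hgpos v 𝒳 hXm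
    have hF₂0 : (0:ℝ) < F₂ := lt_of_lt_of_le one_pos hF₂1
    constructor
    · have h1 : f₁ * (∫ x in 𝒳, (∑ j, v j * p x j)^2)
          ≤ ∫ x in 𝒳, (∑ j, v j * p x j)^2 * f x := by
        rw [← integral_const_mul]
        refine setIntegral_mono_on ((hgint v hv).const_mul f₁) (hgfint v hv) hXm ?_
        intro x hx
        have hfx := (hfbd x hx).1
        nlinarith [sq_nonneg (∑ j, v j * p x j)]
      have h2 := hlowerg v hv
      have hMb1 : (0:ℝ) < (Mb:ℝ)+1 := by positivity
      have h3 : c * h^d ≤ f₁ * ∫ x in 𝒳, (∑ j, v j * p x j)^2 := by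
        rw [hcdef, div_mul_eq_mul_div, div_le_iff₀ hMb1]
        calc f₁ * c₀ * h^d = f₁ * (c₀ * h^d) := by ring
          _ ≤ f₁ * (((Mb:ℝ)+1) * ∫ x in 𝒳, (∑ j, v j * p x j)^2) :=
            mul_le_mul_of_nonneg_left h2 hf₁.le
          _ = f₁ * (∫ x in 𝒳, (∑ j, v j * p x j)^2) * ((Mb:ℝ)+1) := by ring
      linarith
    · have h1 : (∫ x in 𝒳, (∑ j, v j * p x j)^2 * f x)
          ≤ F₂ * ∫ x in 𝒳, (∑ j, v j * p x j)^2 := by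
        rw [← integral_const_mul]
        refine setIntegral_mono_on (hgfint v hv) ((hgint v hv).const_mul F₂) hXm ?_
        intro x hx
        have hfx : f x ≤ F₂ := le_trans (hfbd x hx).2 (le_max_left _ _)
        nlinarith [sq_nonneg (∑ j, v j * p x j)]
      have h2 := hupperg v hv
      have hhd : (0:ℝ) ≤ h^d := by positivity
      have h3 : F₂ * (∫ x in 𝒳, (∑ j, v j * p x j)^2) ≤ C0 * h^d := by
        calc F₂ * (∫ x in 𝒳, (∑ j, v j * p x j)^2)
            ≤ F₂ * ((Mb:ℝ) * (Cg * (ω₀ * h^d))) := mul_le_mul_of_nonneg_left h2 hF₂0.le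
          _ = F₂ * Cg * (Mb:ℝ) * ω₀ * h^d := by ring
          _ ≤ F₂ * Cg * ((Mb:ℝ)+1) * (ω₀+1) * h^d := by
              refine mul_le_mul_of_nonneg_right ?_ hhd
              have h4 : (Mb:ℝ) ≤ (Mb:ℝ)+1 := by linarith
              have h5 : ω₀ ≤ ω₀+1 := by linarith
              refine mul_le_mul (mul_le_mul_of_nonneg_left h4 (by positivity)) h5 hω₀0 ?_
              positivity
          _ = C0 * h^d := by rw [hC0def]
      have h4 : C0 * h^d ≤ C * h^d := mul_le_mul_of_nonneg_right (le_max_right _ _) hhd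
      linarith
  -- conclude via csInf/csSup
  have hSlow : ∀ r ∈ {r : ℝ | ∃ v : Fin K → ℝ, ∑ k, v k ^ 2 = 1 ∧ r = quadForm Qm v},
      c * h^d ≤ r := by rintro r ⟨v, hv, rfl⟩; exact (main v hv).1
  have hSup : ∀ r ∈ {r : ℝ | ∃ v : Fin K → ℝ, ∑ k, v k ^ 2 = 1 ∧ r = quadForm Qm v},
      r ≤ C * h^d := by rintro r ⟨v, hv, rfl⟩; exact (main v hv).2
  have hSne : {r : ℝ | ∃ v : Fin K → ℝ, ∑ k, v k ^ 2 = 1 ∧ r = quadForm Qm v}.Nonempty := by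
    refine ⟨quadForm Qm (fun k => if k = ⟨0, hK⟩ then 1 else 0),
      fun k => if k = ⟨0, hK⟩ then 1 else 0, ?_, rfl⟩
    rw [Finset.sum_eq_single (⟨0, hK⟩ : Fin K)]
    · simp
    · intro k _ hk; simp [hk]
    · simp
  exact ⟨le_csInf hSne hSlow, csInf_le_csSup hSne ⟨c*h^d, hSlow⟩ ⟨C*h^d, hSup⟩,
    csSup_le hSne hSup⟩
end
end

section
/- Let L ≥ 1 be an integer and 0 < a ≤ b. Let K ≥ 1 and let A ∈ ℝ^{K×K} be a symmetric matrix with A_{ij} = 0 whenever |i − j| > L, and suppose a·‖v‖² ≤ v'Av ≤ b·‖v‖² for all v ∈ ℝ^K. Then A is invertible, and there exist constants C > 0 and θ ∈ (0,1), depending only on a, b and L (not on K), such that |(A^{-1})_{ij}| ≤ C·θ^{|i−j|} for all i, j; consequently ‖A^{-1}‖_∞ ≤ C' for a constant C' depending only on a, b and L, where ‖·‖_∞ is the maximum absolute row-sum norm. (Exponential off-diagonal decay of inverses of banded symmetric positive definite matrices, as established in the proof of Lemma SA-1.) -/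
open MeasureTheory Filter Metric Matrix
open scoped BigOperators ENNReal

noncomputable section

namespace Stmt3Aux

open Matrix Finset

variable {K : ℕ}

lemma qf_eq (A : Matrix (Fin K) (Fin K) ℝ) (v : Fin K → ℝ) :
    quadForm A v = v ⬝ᵥ A.mulVec v := by
  simp only [quadForm, dotProduct, Matrix.mulVec, dotProduct, Finset.mul_sum]
  exact Finset.sum_congr rfl fun k _ => Finset.sum_congr rfl fun l _ => by ring

lemma cs_sq (u v : Fin K → ℝ) : (u ⬝ᵥ v)^2 ≤ (∑ k, u k ^2) * (∑ k, v k ^2) :=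
  Finset.sum_mul_sq_le_sq_mul_sq _ _ _

lemma symm_dot (B : Matrix (Fin K) (Fin K) ℝ) (h : B.IsSymm) (x y : Fin K → ℝ) :
    y ⬝ᵥ B.mulVec x = x ⬝ᵥ B.mulVec y := by
  conv_lhs => rw [Matrix.dotProduct_mulVec, ← h, Matrix.vecMul_transpose, dotProduct_comm]

lemma sumsq_nonneg (v : Fin K → ℝ) : 0 ≤ ∑ k, v k ^ 2 :=
  Finset.sum_nonneg fun _ _ => sq_nonneg _

lemma sumsq_eq_zero {v : Fin K → ℝ} (h : ∑ k, v k ^ 2 = 0) : v = 0 := by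
  funext k
  have := (Finset.sum_eq_zero_iff_of_nonneg (fun i _ => sq_nonneg (v i))).mp h k (mem_univ k)
  exact pow_eq_zero_iff (by norm_num) |>.mp this

lemma dot_self (v : Fin K → ℝ) : v ⬝ᵥ v = ∑ k, v k ^ 2 := by
  simp [dotProduct, sq]

/-- Key operator-norm bound from quadratic form bound, for symmetric matrices. -/
lemma op_bound (B : Matrix (Fin K) (Fin K) ℝ) (hsym : B.IsSymm) (q : ℝ) (hq : 0 ≤ q)
    (h : ∀ v, |v ⬝ᵥ B.mulVec v| ≤ q * ∑ k, v k ^ 2) (v : Fin K → ℝ) :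
    ∑ k, (B.mulVec v) k ^ 2 ≤ q ^ 2 * ∑ k, v k ^ 2 := by
  set w := B.mulVec v with hw
  set n1 := ∑ k, v k ^ 2 with hn1
  set n2 := ∑ k, w k ^ 2 with hn2
  have hn1n : 0 ≤ n1 := sumsq_nonneg v
  have hn2n : 0 ≤ n2 := sumsq_nonneg w
  -- bilinear bound
  have bilin : ∀ x y : Fin K → ℝ, x ⬝ᵥ B.mulVec y ≤ (q/2) * ((∑ k, x k ^2) + ∑ k, y k ^2) := by
    intro x y
    have e1 : (x + y) ⬝ᵥ B.mulVec (x + y) - (x - y) ⬝ᵥ B.mulVec (x - y)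
        = 4 * (x ⬝ᵥ B.mulVec y) := by
      have hsd := symm_dot B hsym x y
      simp only [Matrix.mulVec_add, Matrix.mulVec_sub, dotProduct_add, dotProduct_sub,
        add_dotProduct, sub_dotProduct] at *
      linarith
    have e2 : (∑ k, (x + y) k ^ 2) + (∑ k, (x - y) k ^ 2)
        = 2 * (∑ k, x k ^2) + 2 * (∑ k, y k ^2) := by
      simp only [Pi.add_apply, Pi.sub_apply, ← Finset.sum_add_distrib, Finset.mul_sum]
      exact Finset.sum_congr rfl fun k _ => by ring
    have h1 := (abs_le.mp (h (x + y))).2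
    have h2 := (abs_le.mp (h (x - y))).1
    have hx := sumsq_nonneg (x + y)
    have hy := sumsq_nonneg (x - y)
    nlinarith [h1, h2, e1, e2]
  rcases eq_or_lt_of_le hn2n with h0 | h0
  · nlinarith
  rcases eq_or_lt_of_le hn1n with h1 | h1
  · exfalso
    have hv0 : v = 0 := sumsq_eq_zero h1.symm
    have hw0 : w = 0 := by rw [hw, hv0, Matrix.mulVec_zero]
    have : n2 = 0 := by rw [hn2, hw0]; simp
    linarith
  -- choose t = sqrt n1 / sqrt n2
  set s1 := Real.sqrt n1 with hs1
  set s2 := Real.sqrt n2 with hs2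
  have hs1p : 0 < s1 := Real.sqrt_pos.mpr h1
  have hs2p : 0 < s2 := Real.sqrt_pos.mpr h0
  have hs1sq : s1 ^ 2 = n1 := Real.sq_sqrt hn1n
  have hs2sq : s2 ^ 2 = n2 := Real.sq_sqrt hn2n
  have key := bilin ((s1 / s2) • w) v
  have e3 : ((s1 / s2) • w) ⬝ᵥ B.mulVec v = (s1 / s2) * n2 := by
    rw [smul_dotProduct, smul_eq_mul]
    rw [← hw, dot_self, ← hn2]
  have e4 : (∑ k, ((s1 / s2) • w) k ^ 2) = (s1 / s2)^2 * n2 := by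
    simp only [Pi.smul_apply, smul_eq_mul, mul_pow, ← Finset.mul_sum, hn2]
  rw [e3, e4] at key
  have e5 : (s1/s2)^2 * n2 = s1^2 := by field_simp [hs2sq]; exact hs2sq.symm
  have e6 : (s1/s2) * n2 = s1 * s2 := by
    rw [← hs2sq]; field_simp
  rw [e5, e6, hs1sq] at key
  -- key : s1 * s2 ≤ q/2 * (n1 + n1)   i.e. s1 s2 ≤ q n1 = q s1^2
  have : s2 ≤ q * s1 := by
    have : s1 * s2 ≤ q * (s1 * s1) := by nlinarith [key, hs1sq]
    have := le_of_mul_le_mul_left (by linarith [this] : s1 * s2 ≤ s1 * (q * s1)) hs1p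
    linarith
  calc n2 = s2 ^ 2 := hs2sq.symm
    _ ≤ (q * s1)^2 := by nlinarith [hs2p.le]
    _ = q^2 * n1 := by rw [mul_pow, hs1sq]

lemma op_bound_pow (B : Matrix (Fin K) (Fin K) ℝ) (hsym : B.IsSymm) (q : ℝ) (hq : 0 ≤ q)
    (h : ∀ v, |v ⬝ᵥ B.mulVec v| ≤ q * ∑ k, v k ^ 2) (n : ℕ) (v : Fin K → ℝ) :
    ∑ k, ((B ^ n).mulVec v) k ^ 2 ≤ q ^ (2 * n) * ∑ k, v k ^ 2 := by
  induction n with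
  | zero => simp [Matrix.one_mulVec]
  | succ n ih =>
    have e : (B ^ (n+1)).mulVec v = B.mulVec ((B ^ n).mulVec v) := by
      rw [pow_succ', ← Matrix.mulVec_mulVec]
    rw [e]
    calc ∑ k, (B.mulVec ((B ^ n).mulVec v)) k ^ 2
        ≤ q ^ 2 * ∑ k, ((B ^ n).mulVec v) k ^ 2 := op_bound B hsym q hq h _
      _ ≤ q ^ 2 * (q ^ (2 * n) * ∑ k, v k ^ 2) := by
          apply mul_le_mul_of_nonneg_left ih (by positivity)
      _ = q ^ (2 * (n + 1)) * ∑ k, v k ^ 2 := by ring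

lemma banded_pow {L : ℕ} (B : Matrix (Fin K) (Fin K) ℝ)
    (hB : ∀ i j : Fin K, (L : ℤ) < |(i : ℤ) - (j : ℤ)| → B i j = 0) (n : ℕ) :
    ∀ i j : Fin K, ((n * L : ℕ) : ℤ) < |(i : ℤ) - (j : ℤ)| → (B ^ n) i j = 0 := by
  induction n with
  | zero =>
    intro i j hij
    have : i ≠ j := by
      rintro rfl
      simp at hij
    simp [Matrix.one_apply, this]
  | succ n ih =>
    intro i j hij
    rw [pow_succ', Matrix.mul_apply]
    apply Finset.sum_eq_zero
    intro k _
    rcases le_or_gt (|(i : ℤ) - (k : ℤ)|) L with h1 | h1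
    · have h2 : ((n * L : ℕ) : ℤ) < |(k : ℤ) - (j : ℤ)| := by
        have tri : |(i : ℤ) - (j : ℤ)| ≤ |(i : ℤ) - (k : ℤ)| + |(k : ℤ) - (j : ℤ)| := by
          have := abs_sub_abs_le_abs_sub ((i:ℤ) - (j:ℤ)) ((i:ℤ) - (k:ℤ))
          calc |(i : ℤ) - (j : ℤ)| = |((i:ℤ) - k) + ((k:ℤ) - j)| := by ring_nf
            _ ≤ _ := abs_add_le _ _
        push_cast at hij ⊢
        nlinarith [hij, tri, h1]
      rw [ih k j h2, mul_zero]
    · rw [hB i k h1, zero_mul]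


lemma nat_ceil_div (L m : ℕ) (hL : 0 < L) (hm : 0 < m) :
    ∃ N : ℕ, m ≤ N * L ∧ ∀ n, n < N → n * L < m := by
  refine ⟨(m - 1) / L + 1, ?_, ?_⟩
  · have h1 : ¬ (((m - 1) / L + 1) * L ≤ m - 1) := by
      intro hcon
      exact Nat.not_succ_le_self _ ((Nat.le_div_iff_mul_le hL).mpr hcon)
    push_neg at h1
    calc m = (m - 1) + 1 := by omega
      _ ≤ ((m - 1) / L + 1) * L := h1
  · intro n hn
    have h2 : n ≤ (m - 1) / L := Nat.lt_succ_iff.mp hn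
    have h3 : n * L ≤ m - 1 := (Nat.le_div_iff_mul_le hL).mp h2
    omega

lemma lower_bound (A : Matrix (Fin K) (Fin K) ℝ) (a : ℝ) (ha : 0 < a)
    (h : ∀ v : Fin K → ℝ, a * (∑ k, v k ^ 2) ≤ v ⬝ᵥ A.mulVec v) (w : Fin K → ℝ) :
    a ^ 2 * ∑ k, w k ^ 2 ≤ ∑ k, (A.mulVec w) k ^ 2 := by
  have h1 := h w
  have h2 := cs_sq w (A.mulVec w)
  have h3 := sumsq_nonneg w
  have h4 := sumsq_nonneg (A.mulVec w)
  rcases eq_or_lt_of_le h3 with h5 | h5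
  · rw [← h5]; simpa using h4
  · have h6 : 0 ≤ w ⬝ᵥ A.mulVec w := le_trans (by positivity) h1
    nlinarith [mul_le_mul h1 h1 (by positivity) h6, h2, h5]

lemma neumann (A B : Matrix (Fin K) (Fin K) ℝ) (hA : IsUnit A.det) (c : ℝ)
    (hB : c • A = 1 - B) (N : ℕ) :
    A⁻¹ = c • (∑ n ∈ Finset.range N, B ^ n) + B ^ N * A⁻¹ := by
  have step : A⁻¹ = c • (1 : Matrix (Fin K) (Fin K) ℝ) + B * A⁻¹ := by
    have h1 : (1 - B) * A⁻¹ = c • (1 : Matrix (Fin K) (Fin K) ℝ) := by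
      rw [← hB, Matrix.smul_mul, Matrix.mul_nonsing_inv A hA]
    rw [sub_mul, one_mul] at h1
    have := eq_add_of_sub_eq h1
    exact this
  induction N with
  | zero => simp
  | succ N ih =>
    calc A⁻¹ = c • (∑ n ∈ Finset.range N, B ^ n) + B ^ N * A⁻¹ := ih
      _ = c • (∑ n ∈ Finset.range N, B ^ n)
            + B ^ N * (c • (1 : Matrix (Fin K) (Fin K) ℝ) + B * A⁻¹) := by rw [← step]
      _ = c • (∑ n ∈ Finset.range (N + 1), B ^ n) + B ^ (N + 1) * A⁻¹ := by
          rw [Finset.sum_range_succ, smul_add, mul_add, Matrix.mul_smul, mul_one,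
            pow_succ, mul_assoc]
          abel

lemma geo_range_le {θ : ℝ} (h0 : 0 ≤ θ) (h1 : θ < 1) (n : ℕ) :
    ∑ m ∈ Finset.range n, θ ^ m ≤ 1 / (1 - θ) := by
  have h2 : 0 < 1 - θ := by linarith
  have e : (θ ^ n - 1) / (θ - 1) = (1 - θ ^ n) / (1 - θ) := by
    rw [← neg_div_neg_eq]; ring_nf
  rw [geom_sum_eq (ne_of_lt h1), e]
  gcongr
  linarith [pow_nonneg h0 n]

lemma row_geo {θ : ℝ} (h0 : 0 ≤ θ) (h1 : θ < 1) (i : Fin K) :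
    ∑ j : Fin K, θ ^ ((i : ℤ) - (j : ℤ)).natAbs ≤ 2 / (1 - θ) := by
  classical
  have key : ∀ S : Finset (Fin K),
      (∀ x ∈ S, ∀ y ∈ S, ((i : ℤ) - (x : ℤ)).natAbs = ((i : ℤ) - (y : ℤ)).natAbs → x = y) →
      ∑ j ∈ S, θ ^ ((i : ℤ) - (j : ℤ)).natAbs ≤ 1 / (1 - θ) := by
    intro S hinj
    rw [← Finset.sum_image (g := fun j : Fin K => ((i : ℤ) - (j : ℤ)).natAbs)
      (f := fun m => θ ^ m) hinj]
    have hsub : S.image (fun j : Fin K => ((i : ℤ) - (j : ℤ)).natAbs) ⊆ Finset.range K := by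
      intro m hm
      simp only [Finset.mem_image] at hm
      obtain ⟨j, _, rfl⟩ := hm
      have hi := i.isLt
      have hj := j.isLt
      simp only [Finset.mem_range]
      omega
    calc ∑ m ∈ S.image _, θ ^ m ≤ ∑ m ∈ Finset.range K, θ ^ m :=
          Finset.sum_le_sum_of_subset_of_nonneg hsub (fun _ _ _ => pow_nonneg h0 _)
      _ ≤ 1 / (1 - θ) := geo_range_le h0 h1 K
  have hsplit := Finset.sum_filter_add_sum_filter_not Finset.univ
    (fun j : Fin K => (j : ℕ) ≤ (i : ℕ)) (fun j => θ ^ ((i : ℤ) - (j : ℤ)).natAbs)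
  have h2 := key (Finset.univ.filter (fun j : Fin K => (j : ℕ) ≤ (i : ℕ))) ?_
  have h3 := key (Finset.univ.filter (fun j : Fin K => ¬ (j : ℕ) ≤ (i : ℕ))) ?_
  · rw [← hsplit]
    have : (2 : ℝ) / (1 - θ) = 1 / (1 - θ) + 1 / (1 - θ) := by ring
    rw [this]
    exact add_le_add h2 h3
  · intro x hx y hy hxy
    simp only [Finset.mem_filter, Finset.mem_univ, true_and] at hx hy
    exact Fin.ext (by omega)
  · intro x hx y hy hxy
    simp only [Finset.mem_filter, Finset.mem_univ, true_and] at hx hy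
    exact Fin.ext (by omega)

lemma single_sumsq (j : Fin K) : ∑ k, (Pi.single j 1 : Fin K → ℝ) k ^ 2 = 1 := by
  rw [Finset.sum_eq_single j]
  · simp
  · intro k _ hk; simp [Pi.single_apply, hk]
  · intro h; exact absurd (Finset.mem_univ j) h

end Stmt3Aux

/-- exponential off-diagonal decay of inverses of banded symmetric
positive definite matrices, as in the proof of Lemma SA-1.
If `A` is symmetric, banded with bandwidth `L`, and `a‖v‖² ≤ v'Av ≤ b‖v‖²`, then `A`
is invertible and `|(A⁻¹)_{ij}| ≤ C θ^{|i−j|}` with `C, θ, C'` depending only on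
`a`, `b`, `L` (not on `K`); consequently `‖A⁻¹‖_∞ ≤ C'`. -/
theorem statement3 (L : ℕ) (hL : 1 ≤ L) (a b : ℝ) (ha : 0 < a) (hab : a ≤ b) :
    ∃ C θ C' : ℝ, 0 < C ∧ 0 < θ ∧ θ < 1 ∧ 0 < C' ∧
      ∀ (K : ℕ), 1 ≤ K → ∀ A : Matrix (Fin K) (Fin K) ℝ,
        A.IsSymm →
        (∀ i j : Fin K, (L : ℤ) < |(i : ℤ) - (j : ℤ)| → A i j = 0) →
        (∀ v : Fin K → ℝ,
          a * (∑ k, v k ^ 2) ≤ quadForm A v ∧ quadForm A v ≤ b * (∑ k, v k ^ 2)) →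
        IsUnit A.det ∧
        (∀ i j : Fin K, |A⁻¹ i j| ≤ C * θ ^ ((i : ℤ) - (j : ℤ)).natAbs) ∧
        rowSumNorm A⁻¹ ≤ C' := by
  classical
  set q : ℝ := (b - a) / (b + a) with hqdef
  set c : ℝ := 2 / (a + b) with hcdef
  have hab0 : 0 < a + b := by linarith
  have hq0 : 0 ≤ q := by rw [hqdef]; apply div_nonneg <;> linarith
  have hq1 : q < 1 := by rw [hqdef, div_lt_one (by linarith)]; linarith
  set θ : ℝ := max (1/2 : ℝ) (q ^ ((1 : ℝ) / (L : ℝ))) with hθdef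
  have hθ0 : (0:ℝ) < θ := lt_of_lt_of_le (by norm_num) (le_max_left _ _)
  have hLR : (0:ℝ) < (L:ℝ) := by exact_mod_cast hL
  have hθ1 : θ < 1 := by
    apply max_lt (by norm_num)
    rcases eq_or_lt_of_le hq0 with h | h
    · rw [← h, Real.zero_rpow (by positivity)]; norm_num
    · exact Real.rpow_lt_one hq0 hq1 (by positivity)
  have hQL : q ≤ θ ^ L := by
    have h1 : q ^ ((1:ℝ)/(L:ℝ)) ≤ θ := le_max_right _ _
    have h2 : (q ^ ((1:ℝ)/(L:ℝ))) ^ L = q := by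
      rw [← Real.rpow_natCast (q ^ ((1:ℝ)/(L:ℝ))) L, ← Real.rpow_mul hq0]
      rw [one_div, inv_mul_cancel₀ (ne_of_gt hLR), Real.rpow_one]
    calc q = (q ^ ((1:ℝ)/(L:ℝ))) ^ L := h2.symm
      _ ≤ θ ^ L := pow_le_pow_left₀ (Real.rpow_nonneg hq0 _) h1 L
  have hθ1' : 0 < 1 - θ := by linarith
  refine ⟨1/a, θ, (1/a) * (2/(1-θ)), by positivity, hθ0, hθ1,
    mul_pos (by positivity) (div_pos (by norm_num) hθ1'), ?_⟩
  intro K hK A hsymm hband h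
  have hbounds : ∀ v : Fin K → ℝ,
      a * (∑ k, v k ^ 2) ≤ v ⬝ᵥ A.mulVec v ∧ v ⬝ᵥ A.mulVec v ≤ b * (∑ k, v k ^ 2) := by
    intro v; have := h v; rwa [Stmt3Aux.qf_eq] at this
  have hdet : IsUnit A.det := by
    rw [isUnit_iff_ne_zero]
    intro h0
    obtain ⟨v, hv0, hAv⟩ := (Matrix.exists_mulVec_eq_zero_iff).mpr h0
    have h1 := (hbounds v).1
    rw [hAv] at h1
    simp only [dotProduct_zero] at h1
    have h2 : ∑ k, v k ^ 2 = 0 :=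
      le_antisymm (by nlinarith [Stmt3Aux.sumsq_nonneg v]) (Stmt3Aux.sumsq_nonneg v)
    exact hv0 (Stmt3Aux.sumsq_eq_zero h2)
  set B : Matrix (Fin K) (Fin K) ℝ := 1 - c • A with hBdef
  have hcA : c • A = 1 - B := by rw [hBdef, sub_sub_cancel]
  have hBsym : B.IsSymm := by
    show Bᵀ = B
    rw [hBdef, Matrix.transpose_sub, Matrix.transpose_smul, Matrix.transpose_one, hsymm]
  have hBband : ∀ i j : Fin K, (L : ℤ) < |(i : ℤ) - (j : ℤ)| → B i j = 0 := by
    intro i j hij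
    have hne : i ≠ j := by
      rintro rfl
      simp only [sub_self, abs_zero] at hij
      omega
    rw [hBdef]
    simp [Matrix.sub_apply, Matrix.smul_apply, Matrix.one_apply_ne hne, hband i j hij]
  have hc0 : 0 < c := by rw [hcdef]; positivity
  have hBq : ∀ v : Fin K → ℝ, |v ⬝ᵥ B.mulVec v| ≤ q * ∑ k, v k ^ 2 := by
    intro v
    have hv := hbounds v
    have e : v ⬝ᵥ B.mulVec v = (∑ k, v k ^ 2) - c * (v ⬝ᵥ A.mulVec v) := by
      rw [hBdef, Matrix.sub_mulVec, Matrix.one_mulVec, dotProduct_sub,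
        Matrix.smul_mulVec, dotProduct_smul, smul_eq_mul, Stmt3Aux.dot_self]
    have hab0' : a + b ≠ 0 := ne_of_gt hab0
    have hab0'' : b + a ≠ 0 := by intro hh; apply hab0'; linarith
    have hca : c * a = 1 - q := by rw [hcdef, hqdef]; field_simp; ring
    have hcb : c * b = 1 + q := by rw [hcdef, hqdef]; field_simp; ring
    have hs := Stmt3Aux.sumsq_nonneg v
    rw [e, abs_le]
    constructor
    · nlinarith [mul_le_mul_of_nonneg_left hv.2 hc0.le]
    · nlinarith [mul_le_mul_of_nonneg_left hv.1 hc0.le]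
  have hinv : ∀ y : Fin K → ℝ, ∑ k, (A⁻¹.mulVec y) k ^ 2 ≤ 1/a^2 * ∑ k, y k ^ 2 := by
    intro y
    have h1 := Stmt3Aux.lower_bound A a ha (fun v => (hbounds v).1) (A⁻¹.mulVec y)
    rw [Matrix.mulVec_mulVec, Matrix.mul_nonsing_inv A hdet, Matrix.one_mulVec] at h1
    have ha2 : (0:ℝ) < a^2 := by positivity
    rw [one_div, inv_mul_eq_div, le_div_iff₀ ha2]
    nlinarith [h1]
  have hkey : ∀ (i j : Fin K) (N : ℕ), (∀ n, n < N → (B ^ n) i j = 0) →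
      |A⁻¹ i j| ≤ q ^ N * (1/a) := by
    intro i j N hzero
    have hid := Stmt3Aux.neumann A B hdet c hcA N
    have he : A⁻¹ i j = (B ^ N * A⁻¹) i j := by
      conv_lhs => rw [hid]
      rw [Matrix.add_apply, Matrix.smul_apply, Matrix.sum_apply]
      rw [Finset.sum_eq_zero (fun n hn => hzero n (Finset.mem_range.mp hn))]
      simp
    set u := A⁻¹.mulVec (Pi.single j 1) with hu
    set w := (B ^ N).mulVec u with hwdef
    have hw : w i = (B ^ N * A⁻¹) i j := by
      rw [hwdef, hu, Matrix.mulVec_mulVec, Matrix.mulVec_single]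
      exact mul_one _
    have h1 : w i ^ 2 ≤ ∑ k, w k ^ 2 :=
      Finset.single_le_sum (fun k _ => sq_nonneg (w k)) (Finset.mem_univ i)
    have h2 : ∑ k, w k ^ 2 ≤ q ^ (2*N) * ∑ k, u k ^ 2 :=
      Stmt3Aux.op_bound_pow B hBsym q hq0 hBq N u
    have h3 : ∑ k, u k ^ 2 ≤ 1/a^2 := by
      have := hinv (Pi.single j 1)
      rwa [Stmt3Aux.single_sumsq, mul_one] at this
    have e2 : (q ^ N * (1/a))^2 = q^(2*N) * (1/a^2) := by
      rw [mul_pow, ← pow_mul, mul_comm N 2]; ring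
    have h4 : |A⁻¹ i j| ^ 2 ≤ (q ^ N * (1/a))^2 := by
      rw [sq_abs, he, ← hw, e2]
      calc w i ^ 2 ≤ ∑ k, w k ^ 2 := h1
        _ ≤ q ^ (2*N) * ∑ k, u k ^ 2 := h2
        _ ≤ q ^ (2*N) * (1/a^2) := by
            exact mul_le_mul_of_nonneg_left h3 (by positivity)
    have h5 : (0:ℝ) ≤ q ^ N * (1/a) := by positivity
    calc |A⁻¹ i j| = Real.sqrt (|A⁻¹ i j|^2) := (Real.sqrt_sq (abs_nonneg _)).symm
      _ ≤ Real.sqrt ((q^N * (1/a))^2) := Real.sqrt_le_sqrt h4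
      _ = q ^ N * (1/a) := Real.sqrt_sq h5
  have hentry : ∀ i j : Fin K, |A⁻¹ i j| ≤ 1/a * θ ^ ((i:ℤ)-(j:ℤ)).natAbs := by
    intro i j
    rcases Nat.eq_zero_or_pos ((i:ℤ)-(j:ℤ)).natAbs with h0 | h0
    · rw [h0, pow_zero, mul_one]
      have := hkey i j 0 (by intro n hn; omega)
      simpa using this
    · obtain ⟨N, hN1, hN2⟩ := Stmt3Aux.nat_ceil_div L ((i:ℤ)-(j:ℤ)).natAbs (by omega) h0
      have hz : ∀ n, n < N → (B ^ n) i j = 0 := by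
        intro n hn
        apply Stmt3Aux.banded_pow B hBband n i j
        rw [Int.abs_eq_natAbs]
        exact_mod_cast hN2 n hn
      have hqN : q ^ N ≤ θ ^ ((i:ℤ)-(j:ℤ)).natAbs := by
        calc q ^ N ≤ (θ ^ L) ^ N := pow_le_pow_left₀ hq0 hQL N
          _ = θ ^ (L * N) := by rw [← pow_mul]
          _ ≤ θ ^ ((i:ℤ)-(j:ℤ)).natAbs := by
              apply pow_le_pow_of_le_one hθ0.le hθ1.le
              rw [mul_comm]; exact hN1
      calc |A⁻¹ i j| ≤ q ^ N * (1/a) := hkey i j N hz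
        _ ≤ θ ^ ((i:ℤ)-(j:ℤ)).natAbs * (1/a) :=
            mul_le_mul_of_nonneg_right hqN (by positivity)
        _ = 1/a * θ ^ ((i:ℤ)-(j:ℤ)).natAbs := mul_comm _ _
  refine ⟨hdet, hentry, ?_⟩
  haveI : Nonempty (Fin K) := ⟨⟨0, by omega⟩⟩
  show (⨆ k, ∑ l, |A⁻¹ k l|) ≤ 1/a * (2/(1-θ))
  apply ciSup_le
  intro i
  calc ∑ l, |A⁻¹ i l| ≤ ∑ l : Fin K, 1/a * θ ^ ((i:ℤ)-(l:ℤ)).natAbs :=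
        Finset.sum_le_sum (fun l _ => hentry i l)
    _ = 1/a * ∑ l : Fin K, θ ^ ((i:ℤ)-(l:ℤ)).natAbs := by rw [Finset.mul_sum]
    _ ≤ 1/a * (2/(1-θ)) :=
        mul_le_mul_of_nonneg_left (Stmt3Aux.row_geo hθ0.le hθ1 i) (by positivity)
end
end

section
/- Let D ≥ 1 and L ≥ 1 be integers and 0 < a ≤ b. Let n_1,…,n_D ≥ 1 and let A be a real symmetric matrix with rows and columns indexed by I = {1,…,n_1} × ⋯ × {1,…,n_D}, such that A_{αβ} = 0 whenever max_{ℓ} |α_ℓ − β_ℓ| > L, and a·‖v‖² ≤ v'Av ≤ b·‖v‖² for all v ∈ ℝ^I. Then A is invertible, and there exist constants C > 0 and θ ∈ (0,1), depending only on a, b, L and D (not on n_1,…,n_D), such that |(A^{-1})_{αβ}| ≤ C·θ^{max_ℓ |α_ℓ − β_ℓ|} for all α, β ∈ I; consequently max_{α∈I} Σ_{β∈I} |(A^{-1})_{αβ}| ≤ C' for a constant C' depending only on a, b, L and D. (Multi-layer block-banded extension of the exponential inverse-decay bound, as established in the proof of Lemma SA-1.) -/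
open MeasureTheory Filter Metric Matrix
open scoped BigOperators ENNReal

noncomputable section

namespace Stmt4

lemma quadForm_eq_dot {ι : Type*} [Fintype ι] (A : Matrix ι ι ℝ) (v : ι → ℝ) :
    quadForm A v = v ⬝ᵥ (A *ᵥ v) := by
  simp [quadForm, dotProduct, Matrix.mulVec, Finset.mul_sum, mul_assoc]

lemma quadForm_one_sub_smul {ι : Type*} [Fintype ι] [DecidableEq ι] (c : ℝ)
    (A : Matrix ι ι ℝ) (v : ι → ℝ) :
    quadForm (1 - c • A) v = (∑ k, v k ^ 2) - c * quadForm A v := by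
  unfold quadForm
  have h : ∀ k l, v k * ((1 - c • A) k l) * v l
      = (if k = l then v k * v l else 0) - c * (v k * A k l * v l) := by
    intro k l
    simp only [Matrix.sub_apply, Matrix.smul_apply, Matrix.one_apply, smul_eq_mul]
    split <;> ring
  simp_rw [h, Finset.sum_sub_distrib, Finset.sum_ite_eq, Finset.mem_univ, if_true,
    ← Finset.mul_sum, sq]

/-- sum of distinct powers of `σ ∈ [0,1)` is at most `(1-σ)⁻¹`. -/
lemma sum_pow_le_inv {ι : Type*} [DecidableEq ι] {σ : ℝ} (h0 : 0 ≤ σ) (h1 : σ < 1)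
    (s : Finset ι) (f : ι → ℕ) (hf : Set.InjOn f s) :
    ∑ j ∈ s, σ ^ f j ≤ (1 - σ)⁻¹ := by
  rw [← Finset.sum_image (fun x hx y hy h => hf hx hy h)]
  calc ∑ m ∈ s.image f, σ ^ m
      ≤ ∑' m : ℕ, σ ^ m :=
        Summable.sum_le_tsum _ (fun m _ => pow_nonneg h0 m) (summable_geometric_of_lt_one h0 h1)
    _ = (1 - σ)⁻¹ := tsum_geometric_of_lt_one h0 h1

lemma rpow_aux {r : ℝ} (hr : 0 ≤ r) {L : ℕ} (hL : L ≠ 0) (k : ℕ) :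
    (r ^ ((L : ℝ)⁻¹)) ^ (k * L) = r ^ k := by
  have h1 : ((k * L : ℕ) : ℝ) = (k : ℝ) * L := by push_cast; ring
  have h2 : (L : ℝ)⁻¹ * ((k : ℝ) * L) = (k : ℕ) := by
    have : (L : ℝ) ≠ 0 := by exact_mod_cast hL
    field_simp
  rw [← Real.rpow_natCast (r ^ ((L : ℝ)⁻¹)) (k * L), ← Real.rpow_mul hr, h1, h2,
    Real.rpow_natCast]

/-- entrywise bound for powers of a symmetric matrix with quadratic form bounds -/
lemma entry_pow_bound {ι : Type*} [Fintype ι] [DecidableEq ι] {M : Matrix ι ι ℝ}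
    (hM : M.IsHermitian) {r : ℝ} (hr0 : 0 ≤ r)
    (hq : ∀ v : ι → ℝ, |quadForm M v| ≤ r * ∑ k, v k ^ 2) (k : ℕ) (α β : ι) :
    |(M ^ k) α β| ≤ r ^ k := by
  set U : Matrix ι ι ℝ := (hM.eigenvectorUnitary : Matrix ι ι ℝ) with hU
  set μ : ι → ℝ := hM.eigenvalues with hμdef
  have hUstar : U * star U = 1 := mem_unitaryGroup_iff.mp hM.eigenvectorUnitary.2
  have hstarU : star U * U = 1 := mem_unitaryGroup_iff'.mp hM.eigenvectorUnitary.2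
  have hrow : ∀ a : ι, ∑ i, (U a i) ^ 2 = 1 := by
    intro a
    have h := congrFun (congrFun hUstar a) a
    simp only [Matrix.mul_apply, Matrix.star_apply, star_trivial, Matrix.one_apply_eq] at h
    simpa [sq] using h
  have hcol : ∀ i : ι, ∑ a, (U a i) ^ 2 = 1 := by
    intro i
    have h := congrFun (congrFun hstarU i) i
    simp only [Matrix.mul_apply, Matrix.star_apply, star_trivial, Matrix.one_apply_eq] at h
    simpa [sq, mul_comm] using h
  have hμle : ∀ i, |μ i| ≤ r := by
    intro i
    have hv : M *ᵥ (fun a => U a i) = μ i • (fun a => U a i) := by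
      have := hM.mulVec_eigenvectorBasis i
      convert this using 2
      all_goals exact funext fun a => hM.eigenvectorUnitary_apply a i
    have hqv : quadForm M (fun a => U a i) = μ i := by
      rw [quadForm_eq_dot, hv]
      have : (fun a => U a i) ⬝ᵥ (μ i • fun a => U a i) = μ i * ∑ a, (U a i) ^ 2 := by
        simp [dotProduct, Finset.mul_sum, sq]; ring_nf
        exact Finset.sum_congr rfl fun x _ => by ring
      rw [this, hcol i, mul_one]
    have := hq (fun a => U a i)
    rw [hqv, hcol i, mul_one] at this
    exact this
  have hspec : M = U * Matrix.diagonal μ * star U := by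
    have := hM.spectral_theorem
    rwa [RCLike.ofReal_real_eq_id, Function.id_comp] at this
  have hdiag : ∀ m : ℕ, M ^ m = U * Matrix.diagonal (fun i => μ i ^ m) * star U := by
    intro m
    induction m with
    | zero => simp [pow_zero, Matrix.diagonal_one, hUstar]
    | succ m ih =>
        rw [pow_succ, ih, hspec]
        calc U * Matrix.diagonal (fun i => μ i ^ m) * star U * (U * Matrix.diagonal μ * star U)
            = U * Matrix.diagonal (fun i => μ i ^ m) * (star U * U) * Matrix.diagonal μ * star U := by
              noncomm_ring
          _ = U * (Matrix.diagonal (fun i => μ i ^ m) * Matrix.diagonal μ) * star U := by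
              rw [hstarU]; noncomm_ring
          _ = U * Matrix.diagonal (fun i => μ i ^ (m + 1)) * star U := by
              rw [Matrix.diagonal_mul_diagonal]
              have he : (fun i => μ i ^ m * μ i) = fun i => μ i ^ (m + 1) :=
                funext fun i => (pow_succ _ _).symm
              rw [he]
  have hent : (M ^ k) α β = ∑ i, U α i * μ i ^ k * U β i := by
    rw [hdiag k, Matrix.mul_apply]
    refine Finset.sum_congr rfl fun i _ => ?_
    rw [Matrix.mul_diagonal]
    simp [Matrix.star_apply]
  rw [hent]
  calc |∑ i, U α i * μ i ^ k * U β i|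
      ≤ ∑ i, |U α i * μ i ^ k * U β i| := Finset.abs_sum_le_sum_abs _ _
    _ ≤ ∑ i, r ^ k * (((U α i) ^ 2 + (U β i) ^ 2) / 2) := by
        refine Finset.sum_le_sum fun i _ => ?_
        rw [abs_mul, abs_mul, abs_pow]
        have h1 : |μ i| ^ k ≤ r ^ k := pow_le_pow_left₀ (abs_nonneg _) (hμle i) k
        have h2 : |U α i| * |U β i| ≤ ((U α i) ^ 2 + (U β i) ^ 2) / 2 := by
          nlinarith [sq_abs (U α i), sq_abs (U β i), sq_nonneg (|U α i| - |U β i|)]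
        have h3 : (0:ℝ) ≤ |U α i| * |U β i| := by positivity
        nlinarith [abs_nonneg (U α i), abs_nonneg (U β i), pow_nonneg (abs_nonneg (μ i)) k,
          pow_nonneg hr0 k]
    _ = r ^ k * ((∑ i, (U α i)^2) + (∑ i, (U β i)^2)) / 2 := by
        rw [← Finset.mul_sum]; rw [← Finset.sum_div, Finset.sum_add_distrib]; ring
    _ = r ^ k := by rw [hrow α, hrow β]; ring


lemma oneD {σ : ℝ} (h0 : 0 ≤ σ) (h1 : σ < 1) {n : ℕ} (i : Fin n) :
    ∑ j : Fin n, σ ^ (((i : ℤ) - (j : ℤ)).natAbs) ≤ 2 * (1 - σ)⁻¹ := by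
  classical
  rw [← Finset.sum_filter_add_sum_filter_not Finset.univ (fun j : Fin n => (j : ℕ) ≤ (i : ℕ))]
  have hA : ∑ j ∈ Finset.univ.filter (fun j : Fin n => (j : ℕ) ≤ (i : ℕ)),
      σ ^ (((i : ℤ) - (j : ℤ)).natAbs) ≤ (1 - σ)⁻¹ := by
    refine sum_pow_le_inv h0 h1 _ _ ?_
    intro j1 hj1 j2 hj2 he
    simp only [Finset.coe_filter, Set.mem_setOf_eq, Finset.mem_univ, true_and] at hj1 hj2
    have he' : ((i : ℤ) - (j1 : ℤ)).natAbs = ((i : ℤ) - (j2 : ℤ)).natAbs := he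
    have : (j1 : ℕ) = (j2 : ℕ) := by omega
    exact Fin.ext this
  have hB : ∑ j ∈ Finset.univ.filter (fun j : Fin n => ¬ (j : ℕ) ≤ (i : ℕ)),
      σ ^ (((i : ℤ) - (j : ℤ)).natAbs) ≤ (1 - σ)⁻¹ := by
    refine sum_pow_le_inv h0 h1 _ _ ?_
    intro j1 hj1 j2 hj2 he
    simp only [Finset.coe_filter, Set.mem_setOf_eq, Finset.mem_univ, true_and] at hj1 hj2
    have he' : ((i : ℤ) - (j1 : ℤ)).natAbs = ((i : ℤ) - (j2 : ℤ)).natAbs := he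
    have : (j1 : ℕ) = (j2 : ℕ) := by omega
    exact Fin.ext this
  linarith

end Stmt4

set_option maxHeartbeats 1000000 in
/-- multi-layer block-banded extension of the exponential
inverse-decay bound, as in the proof of Lemma SA-1.
If `A` is symmetric, indexed by the product set `I = Π_ℓ {1,…,n_ℓ}`, vanishes when
`max_ℓ |α_ℓ − β_ℓ| > L`, and satisfies `a‖v‖² ≤ v'Av ≤ b‖v‖²`, then `A` is
invertible and `|(A⁻¹)_{αβ}| ≤ C θ^{max_ℓ|α_ℓ−β_ℓ|}` with `C, θ, C'` depending
only on `a`, `b`, `L`, `D`; consequently the maximal absolute row sum of `A⁻¹`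
is at most `C'`. -/
theorem statement4 (D L : ℕ) (hD : 1 ≤ D) (hL : 1 ≤ L)
    (a b : ℝ) (ha : 0 < a) (hab : a ≤ b) :
    ∃ C θ C' : ℝ, 0 < C ∧ 0 < θ ∧ θ < 1 ∧ 0 < C' ∧
      ∀ (nn : Fin D → ℕ), (∀ ℓ, 1 ≤ nn ℓ) →
      ∀ A : Matrix ((ℓ : Fin D) → Fin (nn ℓ)) ((ℓ : Fin D) → Fin (nn ℓ)) ℝ,
        A.IsSymm →
        (∀ α β : (ℓ : Fin D) → Fin (nn ℓ),
          L < Finset.univ.sup (fun ℓ => ((α ℓ : ℤ) - (β ℓ : ℤ)).natAbs) →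
            A α β = 0) →
        (∀ v : ((ℓ : Fin D) → Fin (nn ℓ)) → ℝ,
          a * (∑ k, v k ^ 2) ≤ quadForm A v ∧ quadForm A v ≤ b * (∑ k, v k ^ 2)) →
        IsUnit A.det ∧
        (∀ α β : (ℓ : Fin D) → Fin (nn ℓ),
          |A⁻¹ α β| ≤
            C * θ ^ (Finset.univ.sup (fun ℓ => ((α ℓ : ℤ) - (β ℓ : ℤ)).natAbs))) ∧
        (∀ α, ∑ β, |A⁻¹ α β| ≤ C') := by
  classical
  have hab2 : (0:ℝ) < a + b := by linarith
  have hr00 : (0:ℝ) ≤ (b - a) / (a + b) := div_nonneg (by linarith) hab2.le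
  have hr01 : (b - a) / (a + b) < 1 := (div_lt_one hab2).mpr (by linarith)
  set r : ℝ := ((b - a) / (a + b) + 1) / 2 with hrdef
  have hr0 : 0 < r := by rw [hrdef]; linarith
  have hr1 : r < 1 := by rw [hrdef]; linarith
  have hr0r : (b - a) / (a + b) ≤ r := by rw [hrdef]; linarith
  have hLne : L ≠ 0 := by omega
  have hDne : D ≠ 0 := by omega
  have hLinv : (0:ℝ) < (L:ℝ)⁻¹ := by
    have : (0:ℝ) < (L:ℝ) := by exact_mod_cast Nat.pos_of_ne_zero hLne
    positivity
  have hDinv : (0:ℝ) < (D:ℝ)⁻¹ := by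
    have : (0:ℝ) < (D:ℝ) := by exact_mod_cast Nat.pos_of_ne_zero hDne
    positivity
  set θ : ℝ := r ^ ((L:ℝ)⁻¹) with hθdef
  have hθ0 : 0 < θ := Real.rpow_pos_of_pos hr0 _
  have hθ1 : θ < 1 := Real.rpow_lt_one hr0.le hr1 hLinv
  set σ : ℝ := θ ^ ((D:ℝ)⁻¹) with hσdef
  have hσ0 : 0 < σ := Real.rpow_pos_of_pos hθ0 _
  have hσ1 : σ < 1 := Real.rpow_lt_one hθ0.le hθ1 hDinv
  set c : ℝ := 2 / (a + b) with hcdef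
  have hc0 : 0 < c := by rw [hcdef]; positivity
  set C : ℝ := c * (1 - θ)⁻¹ with hCdef
  have hC0 : 0 < C := mul_pos hc0 (inv_pos.mpr (by linarith))
  set C' : ℝ := C * (2 * (1 - σ)⁻¹) ^ D with hC'def
  have hC'0 : 0 < C' := mul_pos hC0 (pow_pos (mul_pos two_pos (inv_pos.mpr (by linarith))) D)
  have hθpow : ∀ k : ℕ, θ ^ (k * L) = r ^ k := fun k => Stmt4.rpow_aux hr0.le hLne k
  have hσpow : ∀ k : ℕ, σ ^ (k * D) = θ ^ k := fun k => Stmt4.rpow_aux hθ0.le hDne k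
  refine ⟨C, θ, C', hC0, hθ0, hθ1, hC'0, ?_⟩
  intro nn hnn A hsymm hband hquad
  set dd : ((ℓ : Fin D) → Fin (nn ℓ)) → ((ℓ : Fin D) → Fin (nn ℓ)) → ℕ :=
    fun α β => Finset.univ.sup (fun ℓ => ((α ℓ : ℤ) - (β ℓ : ℤ)).natAbs) with hdddef
  have ddtri : ∀ α γ β, dd α β ≤ dd α γ + dd γ β := by
    intro α γ β
    refine Finset.sup_le fun ℓ _ => ?_
    have h1 : ((α ℓ : ℤ) - (γ ℓ : ℤ)).natAbs ≤ dd α γ :=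
      Finset.le_sup (f := fun ℓ => ((α ℓ : ℤ) - (γ ℓ : ℤ)).natAbs) (Finset.mem_univ ℓ)
    have h2 : ((γ ℓ : ℤ) - (β ℓ : ℤ)).natAbs ≤ dd γ β :=
      Finset.le_sup (f := fun ℓ => ((γ ℓ : ℤ) - (β ℓ : ℤ)).natAbs) (Finset.mem_univ ℓ)
    omega
  have dd_self : ∀ α, dd α α = 0 := fun α => Nat.le_zero.mp (Finset.sup_le fun ℓ _ => by simp)
  have hsymm' : ∀ i j, A j i = A i j := fun i j => congrFun (congrFun hsymm i) j
  have hherm : A.IsHermitian := by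
    show Aᴴ = A
    ext i j
    simp only [Matrix.conjTranspose_apply, star_trivial]
    exact hsymm' i j
  have hsum_sq_pos : ∀ v : ((ℓ : Fin D) → Fin (nn ℓ)) → ℝ, v ≠ 0 → 0 < ∑ k, v k ^ 2 := by
    intro v hv
    obtain ⟨k, hk⟩ := Function.ne_iff.mp hv
    exact Finset.sum_pos' (fun _ _ => sq_nonneg _) ⟨k, Finset.mem_univ k, pow_two_pos_of_ne_zero hk⟩
  have hPD : A.PosDef := by
    refine Matrix.PosDef.of_dotProduct_mulVec_pos hherm fun x hx => ?_
    have hx' : (star x) = x := by funext k; exact star_trivial _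
    rw [hx', ← Stmt4.quadForm_eq_dot]
    have h1 := (hquad x).1
    have h2 := hsum_sq_pos x hx
    nlinarith
  have hdet : IsUnit A.det := isUnit_iff_ne_zero.mpr (ne_of_gt hPD.det_pos)
  set B : Matrix ((ℓ : Fin D) → Fin (nn ℓ)) ((ℓ : Fin D) → Fin (nn ℓ)) ℝ := 1 - c • A with hBdef
  have hcA : c • A = 1 - B := (sub_sub_cancel 1 (c • A)).symm
  have hBherm : B.IsHermitian := by
    show Bᴴ = B
    ext i j
    simp only [hBdef, Matrix.sub_apply, Matrix.smul_apply, smul_eq_mul,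
      Matrix.conjTranspose_apply, star_trivial, Matrix.one_apply]
    rw [hsymm' j i]
    congr 1
    simp [eq_comm]
  have hquadB : ∀ v : ((ℓ : Fin D) → Fin (nn ℓ)) → ℝ, |quadForm B v| ≤ r * ∑ k, v k ^ 2 := by
    intro v
    have hS : (0:ℝ) ≤ ∑ k, v k ^ 2 := Finset.sum_nonneg fun _ _ => sq_nonneg _
    have h1 := (hquad v).1
    have h2 := (hquad v).2
    rw [hBdef, Stmt4.quadForm_one_sub_smul, abs_le]
    set S : ℝ := ∑ k, v k ^ 2 with hSdef
    have hca : c * (a + b) = 2 := by rw [hcdef]; field_simp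
    have hra : b - a ≤ r * (a + b) := (div_le_iff₀ hab2).mp hr0r
    have hraS : (b - a) * S ≤ r * ((a + b) * S) := by
      calc (b - a) * S ≤ (r * (a + b)) * S := mul_le_mul_of_nonneg_right hra hS
        _ = r * ((a + b) * S) := by ring
    constructor
    · have h2c : c * quadForm A v ≤ c * (b * S) := mul_le_mul_of_nonneg_left h2 hc0.le
      have hcb2 : c * (b * S) * (a + b) = 2 * (b * S) := by
        calc c * (b * S) * (a + b) = (c * (a + b)) * (b * S) := by ring
          _ = 2 * (b * S) := by rw [hca]
      have hmain : 0 ≤ (S - c * (b * S) + r * S) * (a + b) := by nlinarith [hcb2, hraS, hS]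
      have hmain2 : 0 ≤ S - c * (b * S) + r * S := nonneg_of_mul_nonneg_left hmain hab2
      linarith
    · have h1c : c * (a * S) ≤ c * quadForm A v := mul_le_mul_of_nonneg_left h1 hc0.le
      have hca2 : c * (a * S) * (a + b) = 2 * (a * S) := by
        calc c * (a * S) * (a + b) = (c * (a + b)) * (a * S) := by ring
          _ = 2 * (a * S) := by rw [hca]
      have hmain : 0 ≤ (c * (a * S) - S + r * S) * (a + b) := by nlinarith [hca2, hraS, hS]
      have hmain2 : 0 ≤ c * (a * S) - S + r * S := nonneg_of_mul_nonneg_left hmain hab2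
      linarith
  have hBband : ∀ α β, L < dd α β → B α β = 0 := by
    intro α β h
    have hne : α ≠ β := by
      rintro rfl; rw [dd_self] at h; omega
    have hA0 := hband α β h
    simp [hBdef, Matrix.sub_apply, Matrix.one_apply_ne hne, Matrix.smul_apply, hA0]
  have hBpow : ∀ (k : ℕ) α β, k * L < dd α β → (B ^ k) α β = 0 := by
    intro k
    induction k with
    | zero =>
      intro α β h
      simp only [Nat.zero_mul] at h
      have hne : α ≠ β := by rintro rfl; rw [dd_self] at h; omega
      simp [pow_zero, Matrix.one_apply_ne hne]
    | succ k ih =>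
      intro α β h
      rw [pow_succ', Matrix.mul_apply]
      refine Finset.sum_eq_zero fun γ _ => ?_
      by_cases hγ : L < dd α γ
      · rw [hBband α γ hγ, zero_mul]
      · have hγ' : dd α γ ≤ L := not_lt.mp hγ
        have ht := ddtri α γ β
        have hkl : (k + 1) * L = k * L + L := by ring
        have h5 : k * L + L < dd α γ + dd γ β := by
          rw [← hkl]; exact lt_of_lt_of_le h ht
        have h6 : k * L + L < L + dd γ β :=
          lt_of_lt_of_le h5 (Nat.add_le_add_right hγ' _)
        have h7 : k * L < dd γ β := by
          rw [add_comm (k * L) L] at h6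
          exact Nat.lt_of_add_lt_add_left h6
        rw [ih γ β h7, mul_zero]
  have hBk_entry : ∀ (k : ℕ) α β, |(B ^ k) α β| ≤ r ^ k := fun k α β =>
    Stmt4.entry_pow_bound hBherm hr0.le hquadB k α β
  have hgeo : ∀ K : ℕ, (1 - B) * (∑ k ∈ Finset.range K, B ^ k) = 1 - B ^ K := by
    intro K
    induction K with
    | zero => simp
    | succ K ih =>
      rw [Finset.sum_range_succ, mul_add, ih]
      have hc1 : (1 - B) * B ^ K = B ^ K - B ^ (K + 1) := by
        rw [sub_mul, one_mul, ← pow_succ']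
      rw [hc1]
      abel
  have hdecomp : ∀ K : ℕ, A⁻¹ = c • (∑ k ∈ Finset.range K, B ^ k) + A⁻¹ * B ^ K := by
    intro K
    have h1 : A * (c • (∑ k ∈ Finset.range K, B ^ k)) = 1 - B ^ K := by
      rw [Matrix.mul_smul, ← Matrix.smul_mul, hcA, hgeo K]
    calc A⁻¹ = A⁻¹ * 1 := (mul_one _).symm
      _ = A⁻¹ * ((1 - B ^ K) + B ^ K) := by rw [sub_add_cancel]
      _ = A⁻¹ * (A * (c • (∑ k ∈ Finset.range K, B ^ k))) + A⁻¹ * B ^ K := by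
          rw [mul_add, h1]
      _ = (A⁻¹ * A) * (c • (∑ k ∈ Finset.range K, B ^ k)) + A⁻¹ * B ^ K := by
          rw [Matrix.mul_assoc]
      _ = c • (∑ k ∈ Finset.range K, B ^ k) + A⁻¹ * B ^ K := by
          rw [Matrix.nonsing_inv_mul A hdet, Matrix.one_mul]
  have hdecay : ∀ α β, |A⁻¹ α β| ≤ C * θ ^ dd α β := by
    intro α β
    set M0 : ℝ := ∑ γ, |A⁻¹ α γ| with hM0def
    have hM0nn : 0 ≤ M0 := Finset.sum_nonneg fun _ _ => abs_nonneg _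
    have hKb : ∀ K : ℕ, |A⁻¹ α β| ≤ C * θ ^ dd α β + M0 * r ^ K := by
      intro K
      have he1 : A⁻¹ α β = c * (∑ k ∈ Finset.range K, (B ^ k) α β)
          + ∑ γ, A⁻¹ α γ * (B ^ K) γ β := by
        conv_lhs => rw [hdecomp K]
        simp [Matrix.add_apply, Matrix.smul_apply, Matrix.sum_apply, Matrix.mul_apply,
          smul_eq_mul]
      have h1 : |c * (∑ k ∈ Finset.range K, (B ^ k) α β)| ≤ c * (θ ^ dd α β * (1 - θ)⁻¹) := by
        rw [abs_mul, abs_of_pos hc0]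
        refine mul_le_mul_of_nonneg_left ?_ hc0.le
        calc |∑ k ∈ Finset.range K, (B ^ k) α β|
            ≤ ∑ k ∈ Finset.range K, |(B ^ k) α β| := Finset.abs_sum_le_sum_abs _ _
          _ = ∑ k ∈ (Finset.range K).filter (fun k => dd α β ≤ k * L), |(B ^ k) α β| := by
              refine (Finset.sum_filter_of_ne ?_).symm
              intro k hk hne
              by_contra hcon
              push_neg at hcon
              exact hne (by rw [hBpow k α β hcon, abs_zero])
          _ ≤ ∑ k ∈ (Finset.range K).filter (fun k => dd α β ≤ k * L), r ^ k :=
              Finset.sum_le_sum fun k _ => hBk_entry k α β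
          _ = ∑ k ∈ (Finset.range K).filter (fun k => dd α β ≤ k * L),
                θ ^ dd α β * θ ^ (k * L - dd α β) := by
              refine Finset.sum_congr rfl fun k hk => ?_
              have hk' : dd α β ≤ k * L := (Finset.mem_filter.mp hk).2
              rw [← pow_add, Nat.add_sub_cancel' hk', hθpow k]
          _ = θ ^ dd α β * ∑ k ∈ (Finset.range K).filter (fun k => dd α β ≤ k * L),
                θ ^ (k * L - dd α β) := by rw [Finset.mul_sum]
          _ ≤ θ ^ dd α β * (1 - θ)⁻¹ := by
              refine mul_le_mul_of_nonneg_left ?_ (pow_nonneg hθ0.le _)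
              refine Stmt4.sum_pow_le_inv hθ0.le hθ1 _ _ ?_
              intro k1 hk1 k2 hk2 he
              simp only [Finset.coe_filter, Set.mem_setOf_eq, Finset.mem_range] at hk1 hk2
              have he' : k1 * L - dd α β = k2 * L - dd α β := he
              have h3 : k1 * L = k2 * L := by
                calc k1 * L = k1 * L - dd α β + dd α β := (Nat.sub_add_cancel hk1.2).symm
                  _ = k2 * L - dd α β + dd α β := by rw [he']
                  _ = k2 * L := Nat.sub_add_cancel hk2.2
              exact Nat.eq_of_mul_eq_mul_right (Nat.pos_of_ne_zero hLne) h3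
      have h2 : |∑ γ, A⁻¹ α γ * (B ^ K) γ β| ≤ M0 * r ^ K := by
        calc |∑ γ, A⁻¹ α γ * (B ^ K) γ β| ≤ ∑ γ, |A⁻¹ α γ * (B ^ K) γ β| :=
            Finset.abs_sum_le_sum_abs _ _
          _ ≤ ∑ γ, |A⁻¹ α γ| * r ^ K := Finset.sum_le_sum fun γ _ => by
              rw [abs_mul]
              exact mul_le_mul_of_nonneg_left (hBk_entry K γ β) (abs_nonneg _)
          _ = M0 * r ^ K := by rw [← Finset.sum_mul]
      calc |A⁻¹ α β| = |c * (∑ k ∈ Finset.range K, (B ^ k) α β)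
            + ∑ γ, A⁻¹ α γ * (B ^ K) γ β| := by rw [← he1]
        _ ≤ |c * (∑ k ∈ Finset.range K, (B ^ k) α β)| + |∑ γ, A⁻¹ α γ * (B ^ K) γ β| :=
            abs_add_le _ _
        _ ≤ c * (θ ^ dd α β * (1 - θ)⁻¹) + M0 * r ^ K := add_le_add h1 h2
        _ = C * θ ^ dd α β + M0 * r ^ K := by rw [hCdef]; ring
    have hlim : Tendsto (fun K : ℕ => C * θ ^ dd α β + M0 * r ^ K) atTop
        (nhds (C * θ ^ dd α β + M0 * 0)) :=
      tendsto_const_nhds.add ((tendsto_pow_atTop_nhds_zero_of_lt_one hr0.le hr1).const_mul M0)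
    have hfin := ge_of_tendsto' hlim hKb
    simpa using hfin
  refine ⟨hdet, fun α β => hdecay α β, ?_⟩
  intro α
  calc ∑ β, |A⁻¹ α β| ≤ ∑ β, C * θ ^ dd α β := Finset.sum_le_sum fun β _ => hdecay α β
    _ = C * ∑ β, θ ^ dd α β := by rw [Finset.mul_sum]
    _ ≤ C * (2 * (1 - σ)⁻¹) ^ D := by
        refine mul_le_mul_of_nonneg_left ?_ hC0.le
        calc ∑ β, θ ^ dd α β
            ≤ ∑ β : (ℓ : Fin D) → Fin (nn ℓ), ∏ ℓ, σ ^ (((α ℓ : ℤ) - (β ℓ : ℤ)).natAbs) := by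
              refine Finset.sum_le_sum fun β _ => ?_
              rw [← hσpow (dd α β), Finset.prod_pow_eq_pow_sum]
              refine pow_le_pow_of_le_one hσ0.le hσ1.le ?_
              calc ∑ ℓ, (((α ℓ : ℤ) - (β ℓ : ℤ)).natAbs)
                  ≤ ∑ _ℓ : Fin D, dd α β := Finset.sum_le_sum fun ℓ _ =>
                    Finset.le_sup (f := fun ℓ => ((α ℓ : ℤ) - (β ℓ : ℤ)).natAbs)
                      (Finset.mem_univ ℓ)
                _ = D * dd α β := by
                    rw [Finset.sum_const, Finset.card_univ, Fintype.card_fin, smul_eq_mul]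
                _ = dd α β * D := Nat.mul_comm _ _
          _ = ∏ ℓ, ∑ j : Fin (nn ℓ), σ ^ (((α ℓ : ℤ) - (j : ℤ)).natAbs) := by
              rw [Finset.prod_univ_sum, Fintype.piFinset_univ]
          _ ≤ ∏ _ℓ : Fin D, (2 * (1 - σ)⁻¹) := by
              refine Finset.prod_le_prod (fun ℓ _ => Finset.sum_nonneg fun j _ =>
                pow_nonneg hσ0.le _) (fun ℓ _ => Stmt4.oneD hσ0.le hσ1 (α ℓ))
          _ = (2 * (1 - σ)⁻¹) ^ D := by
              rw [Finset.prod_const, Finset.card_univ, Fintype.card_fin]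
end
end

section
/- Let d ≥ 1, m ≥ 1 be integers and r ∈ (0,1]. There exist constants 0 < c ≤ C depending only on d, m and r such that the following holds: for every h > 0, every convex set δ ⊂ ℝ^d, and points t ∈ δ and t' with the containments B(t', r·h) ⊆ δ ⊆ B(t, h), the Gram matrix G, indexed by multi-indices α, β with [α] ≤ m−1 and [β] ≤ m−1 and defined by G_{αβ} := ∫_δ ((x−t)/h)^{α+β} dx, satisfies c·h^d·‖a‖² ≤ a'Ga ≤ C·h^d·‖a‖² for all real vectors a. (Gram-matrix eigenvalue bounds for scaled monomials on quasi-uniform cells, the content of Lemma SA-7(1) verifying the local-basis assumption for generalized regressograms on general partitions.) -/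
open MeasureTheory Filter Metric Matrix
open scoped BigOperators ENNReal

noncomputable section

open scoped Classical

/-- The index set of multi-indices of order at most `m-1`. -/
def Sfin (d m : ℕ) : Finset (Fin d → ℕ) :=
  (Finset.Iic (fun _ : Fin d => m - 1)).filter (fun α => mOrder α ≤ m - 1)

abbrev Idx (d m : ℕ) := {α : Fin d → ℕ // α ∈ Sfin d m}

lemma zero_mem_Sfin (d m : ℕ) : (fun _ : Fin d => 0) ∈ Sfin d m := by
  simp [Sfin, mOrder, Finset.mem_Iic]
  exact Finset.mem_filter.2 ⟨Finset.mem_Iic.2 (fun i => Nat.zero_le _), by simp⟩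

lemma exp_le (d m : ℕ) (α : Idx d m) (i : Fin d) : α.1 i ≤ m - 1 := by
  have := α.2
  simp only [Sfin, Finset.mem_filter, Finset.mem_Iic] at this
  exact this.1 i

lemma coord_abs_le {d : ℕ} (x : Euc d) (i : Fin d) : |x i| ≤ ‖x‖ := by
  rw [EuclideanSpace.norm_eq, ← Real.sqrt_sq_eq_abs]
  apply Real.sqrt_le_sqrt
  have h1 : |x i|^2 ≤ ∑ j, ‖x j‖^2 := by
    have := Finset.single_le_sum (f := fun j => ‖x j‖^2) (fun j _ => by positivity)
      (Finset.mem_univ i)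
    simpa [Real.norm_eq_abs] using this
  simpa [sq_abs] using h1

lemma prod_pow_abs_le {d e : ℕ} {B : ℝ} (hB : 1 ≤ B) (y : Fin d → ℝ)
    (hy : ∀ i, |y i| ≤ B) (α : Fin d → ℕ) (hα : ∀ i, α i ≤ e) :
    |∏ i, y i ^ α i| ≤ B ^ (d * e) := by
  rw [Finset.abs_prod]
  calc (∏ i, |y i ^ α i|) ≤ ∏ _i : Fin d, B ^ e := by
        apply Finset.prod_le_prod (fun i _ => abs_nonneg _)
        intro i _
        rw [abs_pow]
        calc |y i| ^ α i ≤ B ^ α i := pow_le_pow_left₀ (abs_nonneg _) (hy i) _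
          _ ≤ B ^ e := pow_le_pow_right₀ hB (hα i)
    _ = B ^ (d * e) := by
        rw [Finset.prod_const, Finset.card_univ, Fintype.card_fin, ← pow_mul, Nat.mul_comm]

/-- the polynomial with coefficients `b` evaluated at `w`. -/
def gpoly {d m : ℕ} (b : Idx d m → ℝ) (w : Euc d) : ℝ :=
  ∑ α : Idx d m, b α * ∏ i, w i ^ (α.1 i)

lemma gpoly_continuous {d m : ℕ} (b : Idx d m → ℝ) : Continuous (gpoly b) := by
  apply continuous_finset_sum
  intro α _
  exact continuous_const.mul (continuous_finset_prod _ (fun i _ => by fun_prop))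

lemma gpoly_analytic {d m : ℕ} (b : Idx d m → ℝ) :
    AnalyticOnNhd ℝ (gpoly b) Set.univ := by
  apply Finset.analyticOnNhd_fun_sum
  intro α _
  apply AnalyticOnNhd.mul (analyticOnNhd_const)
  apply Finset.analyticOnNhd_fun_prod
  intro i _
  exact fun w _ => ((EuclideanSpace.proj (𝕜 := ℝ) i).analyticAt w).pow _

/-- If `gpoly b` vanishes on a nonempty open set then `b = 0`. -/
lemma gpoly_eq_zero {d m : ℕ} {b : Idx d m → ℝ} {z : Euc d} {ρ : ℝ} (hρ : 0 < ρ)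
    (hz : ∀ w ∈ ball z ρ, gpoly b w = 0) : b = 0 := by
  have h0 : Set.EqOn (gpoly b) 0 Set.univ := by
    apply (gpoly_analytic b).eqOn_zero_of_preconnected_of_eventuallyEq_zero
      isPreconnected_univ (Set.mem_univ z)
    filter_upwards [isOpen_ball.mem_nhds (mem_ball_self hρ)] with w hw
    exact hz w hw
  -- now transfer to MvPolynomial
  set P : MvPolynomial (Fin d) ℝ :=
    ∑ α : Idx d m, MvPolynomial.monomial (Finsupp.equivFunOnFinite.symm α.1) (b α) with hP
  have hev : ∀ x : Fin d → ℝ, MvPolynomial.eval x P = gpoly b (WithLp.toLp 2 x) := by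
    intro x
    rw [hP, map_sum, gpoly]
    apply Finset.sum_congr rfl
    intro α _
    rw [MvPolynomial.eval_monomial]
    congr 1
    rw [Finsupp.prod_pow]
    apply Finset.prod_congr rfl
    intro i _
    simp [Finsupp.equivFunOnFinite]
  have hP0 : P = 0 := by
    apply MvPolynomial.funext
    intro x
    rw [hev x, map_zero]
    exact h0 (Set.mem_univ _)
  funext α₀
  have : MvPolynomial.coeff (Finsupp.equivFunOnFinite.symm α₀.1) P = b α₀ := by
    rw [hP, MvPolynomial.coeff_sum]
    rw [Finset.sum_eq_single α₀]
    · simp [MvPolynomial.coeff_monomial]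
    · intro α _ hne
      rw [MvPolynomial.coeff_monomial, if_neg]
      intro hc
      exact hne (Subtype.ext (Finsupp.equivFunOnFinite.symm.injective hc))
    · intro hc
      exact absurd (Finset.mem_univ α₀) hc
  rw [hP0] at this
  simp only [MvPolynomial.coeff_zero] at this
  simp [← this]

section
variable (d m : ℕ) (r : ℝ)

/-- The scaled L² mass of the polynomial with coefficients `b` on the ball of radius `r`
centered at `-z`-shifted origin. -/
def Qf (p : (Idx d m → ℝ) × Euc d) : ℝ :=
  ∫ y in closedBall (0 : Euc d) r, (gpoly p.1 (y + p.2)) ^ 2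

lemma Qf_pos (hr0 : 0 < r) (b : Idx d m → ℝ) (hb : ∑ α, b α ^ 2 = 1) (z : Euc d) :
    0 < Qf d m r (b, z) := by
  have hgc : Continuous fun y : Euc d => (gpoly b (y + z)) ^ 2 :=
    ((gpoly_continuous b).comp (continuous_id.add continuous_const)).pow 2
  have hint : IntegrableOn (fun y : Euc d => (gpoly b (y + z)) ^ 2)
      (closedBall (0 : Euc d) r) := by
    exact hgc.continuousOn.integrableOn_compact (isCompact_closedBall _ _)
  rw [Qf, setIntegral_pos_iff_support_of_nonneg_ae
    (Filter.Eventually.of_forall (fun y => sq_nonneg _)) hint]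
  -- find a point where gpoly b (y + z) ≠ 0
  have hb0 : b ≠ 0 := by
    intro hb0; rw [hb0] at hb; simp at hb
  obtain ⟨w, hw, hwne⟩ : ∃ w ∈ ball (0 : Euc d) r, gpoly b (w + z) ≠ 0 := by
    by_contra hc
    push_neg at hc
    apply hb0
    apply gpoly_eq_zero hr0 (z := z)
    intro w hwball
    have : w - z ∈ ball (0 : Euc d) r := by
      simpa [mem_ball, dist_eq_norm] using hwball
    simpa using hc _ this
  have hopen : IsOpen {y : Euc d | gpoly b (y + z) ≠ 0} :=
    isOpen_ne.preimage ((gpoly_continuous b).comp (continuous_id.add continuous_const))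
  have hsub : {y : Euc d | gpoly b (y + z) ≠ 0} ∩ ball (0 : Euc d) r ⊆
      Function.support (fun y : Euc d => (gpoly b (y + z)) ^ 2) ∩ closedBall (0 : Euc d) r := by
    rintro y ⟨h1, h2⟩
    exact ⟨by simpa [Function.mem_support] using pow_ne_zero 2 h1, ball_subset_closedBall h2⟩
  calc (0 : ℝ≥0∞) < volume ({y : Euc d | gpoly b (y + z) ≠ 0} ∩ ball (0 : Euc d) r) := by
        exact (hopen.inter isOpen_ball).measure_pos volume ⟨w, hwne, hw⟩
    _ ≤ _ := measure_mono hsub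

lemma Qf_continuous (hr0 : 0 < r) (hm : 1 ≤ m) : Continuous (Qf d m r) := by
  rw [continuous_iff_continuousAt]
  intro p₀
  have hmeas : MeasurableSet (closedBall (0 : Euc d) r) := measurableSet_closedBall
  set K : ℝ := ((Fintype.card (Idx d m) : ℝ) * (‖p₀.1‖ + 1) *
      (max 1 (r + ‖p₀.2‖ + 1)) ^ (d * (m - 1))) ^ 2 with hK
  apply continuousAt_of_dominated (bound := fun _ => K)
  · filter_upwards with p
    exact (((gpoly_continuous p.1).comp (continuous_id.add continuous_const)).pow 2).aestronglyMeasurable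
  · have hnh : ∀ᶠ p : (Idx d m → ℝ) × Euc d in nhds p₀, dist p p₀ < 1 :=
      Metric.ball_mem_nhds p₀ one_pos
    filter_upwards [hnh] with p hp
    rw [Filter.eventually_iff_exists_mem]
    refine ⟨{y | y ∈ closedBall (0 : Euc d) r}, ?_, ?_⟩
    · exact ae_restrict_mem hmeas
    intro y hy
    have hyb : ‖y‖ ≤ r := by simpa [mem_closedBall, dist_eq_norm] using hy
    have hp1 : ‖p.1‖ ≤ ‖p₀.1‖ + 1 := by
      have h1 : dist p.1 p₀.1 ≤ dist p p₀ := le_max_left _ _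
      have := norm_le_norm_add_norm_sub' p.1 p₀.1  -- ‖p.1‖ ≤ ‖p₀.1‖ + ‖p.1 - p₀.1‖ ?
      calc ‖p.1‖ ≤ ‖p₀.1‖ + ‖p.1 - p₀.1‖ := by
            have := norm_sub_norm_le p.1 p₀.1; linarith
        _ ≤ ‖p₀.1‖ + 1 := by
            rw [← dist_eq_norm]
            have := lt_of_le_of_lt h1 hp
            linarith
    have hp2 : ‖p.2‖ ≤ ‖p₀.2‖ + 1 := by
      have h1 : dist p.2 p₀.2 ≤ dist p p₀ := le_max_right _ _
      calc ‖p.2‖ ≤ ‖p₀.2‖ + ‖p.2 - p₀.2‖ := by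
            have := norm_sub_norm_le p.2 p₀.2; linarith
        _ ≤ ‖p₀.2‖ + 1 := by
            rw [← dist_eq_norm]
            have := lt_of_le_of_lt h1 hp
            linarith
    set B : ℝ := max 1 (r + ‖p₀.2‖ + 1) with hB
    have hB1 : (1:ℝ) ≤ B := le_max_left _ _
    have habs : |gpoly p.1 (y + p.2)| ≤
        (Fintype.card (Idx d m) : ℝ) * (‖p₀.1‖ + 1) * B ^ (d * (m - 1)) := by
      rw [gpoly]
      calc |∑ α : Idx d m, p.1 α * ∏ i, (y + p.2) i ^ (α.1 i)|
          ≤ ∑ α : Idx d m, |p.1 α * ∏ i, (y + p.2) i ^ (α.1 i)| := Finset.abs_sum_le_sum_abs _ _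
        _ ≤ ∑ _α : Idx d m, (‖p₀.1‖ + 1) * B ^ (d * (m - 1)) := by
            apply Finset.sum_le_sum
            intro α _
            rw [abs_mul]
            apply mul_le_mul _ _ (abs_nonneg _) (by positivity)
            · calc |p.1 α| ≤ ‖p.1‖ := norm_le_pi_norm p.1 α
                _ ≤ ‖p₀.1‖ + 1 := hp1
            · apply prod_pow_abs_le hB1
              · intro i
                have : |(y + p.2) i| ≤ |y i| + |p.2 i| := by
                  rw [PiLp.add_apply]; exact abs_add_le _ _
                have h2 : |y i| ≤ r := le_trans (coord_abs_le y i) hyb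
                have h3 : |p.2 i| ≤ ‖p₀.2‖ + 1 := le_trans (coord_abs_le p.2 i) hp2
                calc |(y + p.2) i| ≤ r + ‖p₀.2‖ + 1 := by linarith
                  _ ≤ B := le_max_right _ _
              · exact fun i => exp_le d m α i
        _ = (Fintype.card (Idx d m) : ℝ) * ((‖p₀.1‖ + 1) * B ^ (d * (m - 1))) := by
            rw [Finset.sum_const, Finset.card_univ, nsmul_eq_mul]
        _ = (Fintype.card (Idx d m) : ℝ) * (‖p₀.1‖ + 1) * B ^ (d * (m - 1)) := by ring
    rw [Real.norm_eq_abs, abs_pow, hK]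
    exact pow_le_pow_left₀ (abs_nonneg _) habs 2
  · exact integrableOn_const measure_closedBall_lt_top.ne
  · filter_upwards with y
    apply ContinuousAt.pow
    apply Continuous.continuousAt
    apply continuous_finset_sum
    intro α _
    apply Continuous.mul
    · exact (continuous_apply α).comp continuous_fst
    · apply continuous_finset_prod
      intro i _
      apply Continuous.pow
      fun_prop

end

lemma exists_c (d m : ℕ) (r : ℝ) (hm : 1 ≤ m) (hr0 : 0 < r) :
    ∃ c : ℝ, 0 < c ∧ ∀ b : Idx d m → ℝ, (∑ α, b α ^ 2 = 1) → ∀ z : Euc d, ‖z‖ ≤ 1 →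
      c ≤ Qf d m r (b, z) := by
  have hsum_cont : Continuous fun b : Idx d m → ℝ => ∑ α, b α ^ 2 :=
    continuous_finset_sum _ (fun α _ => (continuous_apply α).pow 2)
  set A : Set (Idx d m → ℝ) := {b | ∑ α, b α ^ 2 = 1} with hA
  have hAcomp : IsCompact A := by
    apply IsCompact.of_isClosed_subset (isCompact_closedBall (0 : Idx d m → ℝ) 1)
    · exact isClosed_eq hsum_cont continuous_const
    · intro b hb
      rw [mem_closedBall_zero_iff]
      apply pi_norm_le_iff_of_nonneg zero_le_one |>.2
      intro α
      have h1 : b α ^ 2 ≤ 1 := by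
        have := Finset.single_le_sum (f := fun α => b α ^ 2)
          (fun β _ => sq_nonneg _) (Finset.mem_univ α)
        rw [hb] at this; exact this
      rw [Real.norm_eq_abs]
      nlinarith [abs_nonneg (b α), sq_abs (b α)]
  have hK : IsCompact (A ×ˢ closedBall (0 : Euc d) 1) :=
    hAcomp.prod (isCompact_closedBall _ _)
  have hne : (A ×ˢ closedBall (0 : Euc d) 1).Nonempty := by
    have hα₀ : (fun _ : Fin d => 0) ∈ Sfin d m := zero_mem_Sfin d m
    refine ⟨(Pi.single ⟨_, hα₀⟩ 1, 0), ?_, mem_closedBall_self zero_le_one⟩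
    rw [hA, Set.mem_setOf_eq]
    rw [Finset.sum_eq_single (⟨_, hα₀⟩ : Idx d m)]
    · simp
    · intro β _ hβ
      simp [Pi.single_eq_of_ne hβ]
    · intro hc; exact absurd (Finset.mem_univ _) hc
  obtain ⟨p₀, hp₀, hmin⟩ := hK.exists_isMinOn hne (Qf_continuous d m r hr0 hm).continuousOn
  refine ⟨Qf d m r p₀, ?_, ?_⟩
  · have := Qf_pos d m r hr0 p₀.1 hp₀.1 p₀.2
    simpa using this
  · intro b hb z hz
    exact hmin (Set.mk_mem_prod hb (by rwa [mem_closedBall_zero_iff]))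

/-- Lemma SA-7(1): Gram-matrix eigenvalue bounds for scaled
monomials on quasi-uniform cells. There are constants `0 < c ≤ C` depending only
on `d`, `m`, `r` such that for every `h > 0`, every convex cell `δ` with
`B(t', r·h) ⊆ δ ⊆ B(t, h)` and `t ∈ δ`, the Gram matrix
`G_{αβ} = ∫_δ ((x−t)/h)^{α+β} dx` over multi-indices of order at most `m−1`
satisfies `c·h^d·‖a‖² ≤ a'Ga ≤ C·h^d·‖a‖²`. -/
theorem statement15 (d m : ℕ) (hd : 1 ≤ d) (hm : 1 ≤ m)
    (r : ℝ) (hr0 : 0 < r) (hr1 : r ≤ 1) :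
    ∃ c C : ℝ, 0 < c ∧ c ≤ C ∧
      ∀ (h : ℝ), 0 < h → ∀ (δ : Set (Euc d)), Convex ℝ δ →
      ∀ t : Euc d, t ∈ δ → ∀ t' : Euc d,
        Metric.closedBall t' (r * h) ⊆ δ → δ ⊆ Metric.closedBall t h →
      ∀ a : (Fin d → ℕ) → ℝ,
        (let S : Finset (Fin d → ℕ) :=
          (Finset.Iic (fun _ : Fin d => m - 1)).filter (fun α => mOrder α ≤ m - 1)
        let G : (Fin d → ℕ) → (Fin d → ℕ) → ℝ := fun α β =>
          ∫ x in δ, ∏ i, ((x i - t i) / h) ^ (α i + β i)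
        c * h ^ d * (∑ α ∈ S, a α ^ 2) ≤ ∑ α ∈ S, ∑ β ∈ S, a α * G α β * a β ∧
        ∑ α ∈ S, ∑ β ∈ S, a α * G α β * a β ≤ C * h ^ d * (∑ α ∈ S, a α ^ 2)) := by
  obtain ⟨c, hc, hcmin⟩ := exists_c d m r hm hr0
  set N : ℝ := ((Sfin d m).card : ℝ) with hN
  set Bvol : ℝ := (volume (closedBall (0 : Euc d) 1)).toReal with hBvol
  have hBvol0 : 0 ≤ Bvol := ENNReal.toReal_nonneg
  have hN0 : 0 ≤ N := Nat.cast_nonneg _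
  refine ⟨c, max c (N * Bvol), hc, le_max_left _ _, ?_⟩
  intro h hh δ hδconv t ht t' hin hout a
  intro S G
  have hS : S = Sfin d m := rfl
  have hG : ∀ α β, G α β = ∫ x in δ, ∏ i, ((x i - t i) / h) ^ (α i + β i) := fun _ _ => rfl
  set s2 : ℝ := ∑ α ∈ S, a α ^ 2 with hs2
  have hs2nn : 0 ≤ s2 := Finset.sum_nonneg (fun α _ => sq_nonneg _)
  set P : Euc d → ℝ := fun x => ∑ α ∈ Sfin d m, a α * ∏ i, ((x i - t i) / h) ^ (α i) with hP
  have hmono_cont : ∀ α : Fin d → ℕ, Continuous fun x : Euc d => ∏ i, ((x i - t i) / h) ^ (α i) :=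
    fun α => continuous_finset_prod _ (fun i _ => by
      have h1 : Continuous fun x : Euc d => x i := by fun_prop
      exact ((h1.sub continuous_const).div_const h).pow _)
  have hPcont : Continuous P :=
    continuous_finset_sum _ (fun α _ => continuous_const.mul (hmono_cont α))
  have hIntOn : ∀ f : Euc d → ℝ, Continuous f → IntegrableOn f δ volume := fun f hf =>
    (hf.continuousOn.integrableOn_compact (isCompact_closedBall t h)).mono_set hout
  have hδnull : NullMeasurableSet δ volume := hδconv.nullMeasurableSet (μ := volume)
  have hδfin : volume δ < ⊤ := lt_of_le_of_lt (measure_mono hout) measure_closedBall_lt_top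
  -- Step A : quadratic form equals ∫ P²
  have hsqP : ∀ x : Euc d, P x ^ 2 = ∑ α ∈ Sfin d m, ∑ β ∈ Sfin d m,
      (a α * ∏ i, ((x i - t i) / h) ^ (α i)) * (a β * ∏ i, ((x i - t i) / h) ^ (β i)) := by
    intro x
    rw [hP, pow_two, Finset.sum_mul_sum]
  have hterm : ∀ α β : Fin d → ℕ, a α * G α β * a β =
      ∫ x in δ, (a α * ∏ i, ((x i - t i) / h) ^ (α i)) * (a β * ∏ i, ((x i - t i) / h) ^ (β i)) := by
    intro α β
    have heq : ∀ x : Euc d,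
        (a α * ∏ i, ((x i - t i) / h) ^ (α i)) * (a β * ∏ i, ((x i - t i) / h) ^ (β i)) =
        (a α * a β) * ∏ i, ((x i - t i) / h) ^ (α i + β i) := by
      intro x
      simp_rw [pow_add, Finset.prod_mul_distrib]
      ring
    calc a α * G α β * a β = (a α * a β) * ∫ x in δ, ∏ i, ((x i - t i) / h) ^ (α i + β i) := by
          rw [hG]; ring
      _ = ∫ x in δ, (a α * a β) * ∏ i, ((x i - t i) / h) ^ (α i + β i) :=
          (integral_const_mul _ _).symm
      _ = _ := by simp_rw [heq]
  have hIntg : ∀ α β : Fin d → ℕ, IntegrableOn (fun x : Euc d =>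
      (a α * ∏ i, ((x i - t i) / h) ^ (α i)) * (a β * ∏ i, ((x i - t i) / h) ^ (β i))) δ volume :=
    fun α β => hIntOn _ ((continuous_const.mul (hmono_cont α)).mul
      (continuous_const.mul (hmono_cont β)))
  have hQF : ∑ α ∈ S, ∑ β ∈ S, a α * G α β * a β = ∫ x in δ, P x ^ 2 := by
    rw [hS]
    calc ∑ α ∈ Sfin d m, ∑ β ∈ Sfin d m, a α * G α β * a β
        = ∑ α ∈ Sfin d m, ∫ x in δ, ∑ β ∈ Sfin d m,
            (a α * ∏ i, ((x i - t i) / h) ^ (α i)) * (a β * ∏ i, ((x i - t i) / h) ^ (β i)) := by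
          refine Finset.sum_congr rfl (fun α _ => ?_)
          simp_rw [hterm]
          exact (integral_finset_sum _ (fun β _ => hIntg α β)).symm
      _ = ∫ x in δ, ∑ α ∈ Sfin d m, ∑ β ∈ Sfin d m,
            (a α * ∏ i, ((x i - t i) / h) ^ (α i)) * (a β * ∏ i, ((x i - t i) / h) ^ (β i)) :=
          (integral_finset_sum _ (fun α _ => integrable_finset_sum _ (fun β _ => hIntg α β))).symm
      _ = ∫ x in δ, P x ^ 2 := by
          congr 1
          funext x
          exact (hsqP x).symm
  -- pointwise bound on δ
  have hPbound : ∀ x ∈ δ, P x ^ 2 ≤ N * s2 := by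
    intro x hx
    have hx' : ‖x - t‖ ≤ h := by
      have := hout hx
      rwa [mem_closedBall, dist_eq_norm] at this
    have hcoord : ∀ i, |((x i - t i) / h)| ≤ 1 := by
      intro i
      rw [abs_div, abs_of_pos hh, div_le_one hh]
      have : |x i - t i| = |(x - t) i| := by rw [PiLp.sub_apply]
      rw [this]
      exact (coord_abs_le (x - t) i).trans hx'
    have hPabs : |P x| ≤ ∑ α ∈ Sfin d m, |a α| := by
      rw [hP]
      refine (Finset.abs_sum_le_sum_abs _ _).trans ?_
      apply Finset.sum_le_sum
      intro α hα
      rw [abs_mul]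
      have h1 : |∏ i, ((x i - t i) / h) ^ (α i)| ≤ 1 := by
        have := prod_pow_abs_le (e := m - 1) le_rfl (fun i => (x i - t i) / h) hcoord α ?_
        · simpa using this
        · intro i
          have := hα
          rw [Sfin, Finset.mem_filter, Finset.mem_Iic] at this
          exact this.1 i
      calc |a α| * |∏ i, ((x i - t i) / h) ^ (α i)| ≤ |a α| * 1 :=
            mul_le_mul_of_nonneg_left h1 (abs_nonneg _)
        _ = |a α| := mul_one _
    calc P x ^ 2 = |P x| ^ 2 := (sq_abs _).symm
      _ ≤ (∑ α ∈ Sfin d m, |a α|) ^ 2 := pow_le_pow_left₀ (abs_nonneg _) hPabs 2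
      _ ≤ (Sfin d m).card * ∑ α ∈ Sfin d m, |a α| ^ 2 := sq_sum_le_card_mul_sum_sq
      _ = N * s2 := by rw [hN, hs2, hS]; simp_rw [sq_abs]
  -- upper bound
  have hvol : (volume δ).toReal ≤ h ^ d * Bvol := by
    have h1 : volume δ ≤ ENNReal.ofReal (h ^ d) * volume (closedBall (0 : Euc d) 1) := by
      calc volume δ ≤ volume (closedBall t h) := measure_mono hout
        _ = _ := by
            rw [Measure.addHaar_closedBall' volume t hh.le, finrank_euclideanSpace_fin]
    calc (volume δ).toReal
        ≤ (ENNReal.ofReal (h ^ d) * volume (closedBall (0 : Euc d) 1)).toReal := by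
          apply ENNReal.toReal_mono _ h1
          exact ENNReal.mul_ne_top ENNReal.ofReal_ne_top measure_closedBall_lt_top.ne
      _ = h ^ d * Bvol := by
          rw [ENNReal.toReal_mul, ENNReal.toReal_ofReal (by positivity), hBvol]
  have hupper : ∫ x in δ, P x ^ 2 ≤ max c (N * Bvol) * h ^ d * s2 := by
    have h1 : ∫ x in δ, P x ^ 2 ≤ ∫ _x in δ, N * s2 := by
      apply integral_mono_ae (hIntOn _ (hPcont.pow 2))
        (integrableOn_const hδfin.ne)
      filter_upwards [ae_restrict_mem₀ hδnull] with x hx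
      exact hPbound x hx
    have h2 : ∫ _x in δ, N * s2 = (volume δ).toReal * (N * s2) := by
      rw [setIntegral_const, smul_eq_mul]; rfl
    calc ∫ x in δ, P x ^ 2 ≤ (volume δ).toReal * (N * s2) := by rw [← h2]; exact h1
      _ ≤ (h ^ d * Bvol) * (N * s2) := by
          apply mul_le_mul_of_nonneg_right hvol (by positivity)
      _ = (N * Bvol) * (h ^ d * s2) := by ring
      _ ≤ max c (N * Bvol) * (h ^ d * s2) :=
          mul_le_mul_of_nonneg_right (le_max_right _ _) (by positivity)
      _ = max c (N * Bvol) * h ^ d * s2 := by ring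
  -- lower bound
  have hrh : 0 < r * h := mul_pos hr0 hh
  have ht'δ : t' ∈ δ := hin (mem_closedBall_self hrh.le)
  have ht't : ‖t' - t‖ ≤ h := by
    have := hout ht'δ
    rwa [mem_closedBall, dist_eq_norm] at this
  set z : Euc d := (h⁻¹ : ℝ) • (t' - t) with hz
  have hz1 : ‖z‖ ≤ 1 := by
    rw [hz, norm_smul, Real.norm_eq_abs, abs_inv, abs_of_pos hh]
    calc h⁻¹ * ‖t' - t‖ ≤ h⁻¹ * h := by
          apply mul_le_mul_of_nonneg_left ht't (by positivity)
      _ = 1 := inv_mul_cancel₀ hh.ne'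
  set φ : Euc d → Euc d := fun y => t' + h • y with hφ
  have himg : φ '' closedBall (0 : Euc d) r = closedBall t' (r * h) := by
    ext x
    constructor
    · rintro ⟨y, hy, rfl⟩
      rw [mem_closedBall_zero_iff] at hy
      rw [mem_closedBall, dist_eq_norm, hφ]
      simp only [add_sub_cancel_left]
      rw [norm_smul, Real.norm_eq_abs, abs_of_pos hh]
      calc h * ‖y‖ ≤ h * r := mul_le_mul_of_nonneg_left hy hh.le
        _ = r * h := mul_comm _ _
    · intro hx
      rw [mem_closedBall, dist_eq_norm] at hx
      refine ⟨h⁻¹ • (x - t'), ?_, ?_⟩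
      · rw [mem_closedBall_zero_iff, norm_smul, Real.norm_eq_abs, abs_inv, abs_of_pos hh]
        calc h⁻¹ * ‖x - t'‖ ≤ h⁻¹ * (r * h) := by
              apply mul_le_mul_of_nonneg_left hx (by positivity)
          _ = r := by field_simp
      · rw [hφ]
        show t' + h • (h⁻¹ • (x - t')) = x
        rw [smul_smul, mul_inv_cancel₀ hh.ne', one_smul]
        abel
  have hder : ∀ y ∈ closedBall (0 : Euc d) r, HasFDerivWithinAt φ
      (h • ContinuousLinearMap.id ℝ (Euc d)) (closedBall (0 : Euc d) r) y := by
    intro y _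
    exact (((hasFDerivAt_id y).const_smul h).const_add t').hasFDerivWithinAt
  have hdet : (h • ContinuousLinearMap.id ℝ (Euc d)).det = h ^ d := by
    have h1 : ((ContinuousLinearMap.id ℝ (Euc d)) : Euc d →ₗ[ℝ] Euc d)
        = (LinearMap.id : Euc d →ₗ[ℝ] Euc d) := rfl
    rw [ContinuousLinearMap.det, ContinuousLinearMap.coe_smul, h1, LinearMap.det_smul,
      LinearMap.det_id, finrank_euclideanSpace_fin, mul_one]
  have hinj : Set.InjOn φ (closedBall (0 : Euc d) r) := by
    intro y1 _ y2 _ hy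
    rw [hφ] at hy
    have h2 : h • y1 = h • y2 := by
      have := hy
      simpa using this
    exact smul_right_injective (Euc d) hh.ne' h2
  have hCOV : ∫ x in closedBall t' (r * h), P x ^ 2
      = ∫ y in closedBall (0 : Euc d) r, h ^ d * P (t' + h • y) ^ 2 := by
    rw [← himg, integral_image_eq_integral_abs_det_fderiv_smul volume
      measurableSet_closedBall hder hinj (fun x => P x ^ 2)]
    congr 1
    funext y
    rw [hdet, smul_eq_mul, abs_of_pos (pow_pos hh d)]
  have hPφ : ∀ y : Euc d, P (t' + h • y) = ∑ α ∈ Sfin d m, a α * ∏ i, (y i + z i) ^ (α i) := by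
    intro y
    rw [hP]
    refine Finset.sum_congr rfl (fun α _ => ?_)
    congr 1
    refine Finset.prod_congr rfl (fun i _ => ?_)
    congr 1
    have h1 : (t' + h • y) i = t' i + h * y i := rfl
    have h2 : z i = h⁻¹ * (t' i - t i) := rfl
    rw [h1, h2]
    field_simp
    ring
  rcases eq_or_lt_of_le hs2nn with hs20 | hs2pos
  · have ha0 : ∀ α ∈ Sfin d m, a α = 0 := by
      intro α hα
      have h1 := (Finset.sum_eq_zero_iff_of_nonneg
        (fun β (_ : β ∈ S) => sq_nonneg (a β))).1 hs20.symm α (by rwa [hS])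
      exact pow_eq_zero_iff two_ne_zero |>.1 h1
    have hQF0 : ∑ α ∈ S, ∑ β ∈ S, a α * G α β * a β = 0 := by
      apply Finset.sum_eq_zero
      intro α hα
      apply Finset.sum_eq_zero
      intro β hβ
      rw [ha0 α (by rwa [← hS])]
      ring
    rw [hQF0, ← hs20]
    norm_num
  · set sq2 : ℝ := Real.sqrt s2 with hsq2def
    have hsqpos : 0 < sq2 := Real.sqrt_pos.2 hs2pos
    have hsqsq : sq2 ^ 2 = s2 := Real.sq_sqrt hs2nn
    set b : Idx d m → ℝ := fun α => a α.1 / sq2 with hb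
    have hcoe : ∑ α : Idx d m, a α.1 ^ 2 = s2 := by
      rw [hs2, hS]
      exact Finset.sum_coe_sort (Sfin d m) (fun γ => a γ ^ 2)
    have hbsum : ∑ α, b α ^ 2 = 1 := by
      calc ∑ α : Idx d m, b α ^ 2 = (∑ α : Idx d m, a α.1 ^ 2) / sq2 ^ 2 := by
            rw [hb]
            simp_rw [div_pow]
            rw [← Finset.sum_div]
        _ = 1 := by
            rw [hcoe, hsqsq]
            exact div_self hs2pos.ne'
    have hgp : ∀ y : Euc d, (∑ α ∈ Sfin d m, a α * ∏ i, (y i + z i) ^ (α i))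
        = sq2 * gpoly b (y + z) := by
      intro y
      rw [gpoly, Finset.mul_sum,
        ← Finset.sum_coe_sort (Sfin d m) (fun γ => a γ * ∏ i, (y i + z i) ^ (γ i))]
      refine Finset.sum_congr rfl (fun α _ => ?_)
      have hprod : (∏ i, (y + z) i ^ (α.1 i)) = ∏ i, (y i + z i) ^ (α.1 i) :=
        Finset.prod_congr rfl (fun i _ => rfl)
      rw [hb, hprod]
      field_simp
    have hQfb := hcmin b hbsum z hz1
    have hlow2 : ∫ y in closedBall (0 : Euc d) r, h ^ d * P (t' + h • y) ^ 2
        = (h ^ d * s2) * Qf d m r (b, z) := by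
      have heq : ∀ y : Euc d, h ^ d * P (t' + h • y) ^ 2
          = (h ^ d * s2) * gpoly b (y + z) ^ 2 := by
        intro y
        rw [hPφ y, hgp y, mul_pow, hsqsq]
        ring
      simp_rw [heq]
      rw [integral_const_mul, Qf]
    have hlower : c * h ^ d * s2 ≤ ∑ α ∈ S, ∑ β ∈ S, a α * G α β * a β := by
      rw [hQF]
      calc c * h ^ d * s2 = (h ^ d * s2) * c := by ring
        _ ≤ (h ^ d * s2) * Qf d m r (b, z) :=
            mul_le_mul_of_nonneg_left hQfb (mul_nonneg (pow_nonneg hh.le d) hs2nn)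
        _ = ∫ y in closedBall (0 : Euc d) r, h ^ d * P (t' + h • y) ^ 2 := hlow2.symm
        _ = ∫ x in closedBall t' (r * h), P x ^ 2 := hCOV.symm
        _ ≤ ∫ x in δ, P x ^ 2 := by
            apply setIntegral_mono_set (hIntOn _ (hPcont.pow 2))
              (Filter.Eventually.of_forall (fun x => sq_nonneg _))
              (HasSubset.Subset.eventuallyLE hin)
    refine ⟨hlower, ?_⟩
    rw [hQF]
    exact hupper
end
end
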